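/- arXiv:2105.08271 — 7 statements merged into one kernel-verified Lean document; each statement's English description precedes it below -/
import Mathlib

section
/- Let v ∈ L^∞_loc(Ω), θ ≥ 1 and c > 0 be such that for every 0 < ρ < R with the closed ball B_R ⊂ Ω one has ‖v‖_{L^∞(B_ρ)}^{1/θ} ≤ (c/(R-ρ)^n) ∫_{B_R} |v| dx. Then for every λ ∈ ((θ-1)/θ, 1) there exists a constant c_λ such that for every 0 < ρ < R, ‖v‖_{L^∞(B_ρ)}^{(1-θ(1-λ))/θ} ≤ (c_λ/(R-ρ)^n) ∫_{B_R} |v|^λ dx. -/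
open MeasureTheory Filter
open scoped ENNReal NNReal

theorem interpolation_lemma {n : ℕ}
    (Ω : Set (EuclideanSpace ℝ (Fin n))) (hΩ : IsOpen Ω)
    (x₀ : EuclideanSpace ℝ (Fin n)) (v : EuclideanSpace ℝ (Fin n) → ℝ)
    (hv : ∀ K : Set (EuclideanSpace ℝ (Fin n)), IsCompact K → K ⊆ Ω →
      eLpNormEssSup v (volume.restrict K) < ⊤)
    (θ c : ℝ) (hθ : 1 ≤ θ) (hc : 0 < c)
    (h : ∀ ρ R : ℝ, 0 < ρ → ρ < R → Metric.closedBall x₀ R ⊆ Ω →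
      (eLpNormEssSup v (volume.restrict (Metric.ball x₀ ρ))) ^ (1/θ)
        ≤ ENNReal.ofReal (c / (R - ρ)^n) * ∫⁻ x in Metric.ball x₀ R, ‖v x‖₊) :
    ∀ lam : ℝ, (θ - 1)/θ < lam → lam < 1 →
      ∃ clam : ℝ, 0 < clam ∧ ∀ ρ R : ℝ, 0 < ρ → ρ < R → Metric.closedBall x₀ R ⊆ Ω →
        (eLpNormEssSup v (volume.restrict (Metric.ball x₀ ρ))) ^ ((1 - θ*(1-lam))/θ)
          ≤ ENNReal.ofReal (clam / (R - ρ)^n) *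
              ∫⁻ x in Metric.ball x₀ R, (‖v x‖₊ : ENNReal) ^ lam := by
  intro lam hlam1 hlam2
  have hθ0 : (0:ℝ) < θ := lt_of_lt_of_le one_pos hθ
  have hlam0 : 0 < lam := lt_of_le_of_lt (div_nonneg (by linarith) hθ0.le) hlam1
  set α : ℝ := θ * (1 - lam) with hαdef
  have hα0 : 0 < α := mul_pos hθ0 (by linarith)
  have hα1 : α < 1 := by
    have := (div_lt_iff₀ hθ0).mp hlam1
    nlinarith
  have h1α : 0 < 1 - α := by linarith
  set γ : ℝ := n * θ / (1 - α) with hγdef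
  have hγ0 : 0 ≤ γ := div_nonneg (by positivity) h1α.le
  have hγ1 : γ * (1 - α) = n * θ := by
    rw [hγdef]; field_simp
  refine ⟨c * 2 ^ ((n:ℝ)/(1-α)), by positivity, ?_⟩
  intro ρ₀ R₀ hρ₀ hρR₀ hsub
  set M : ℝ → ℝ≥0∞ := fun r => eLpNormEssSup v (volume.restrict (Metric.ball x₀ r)) with hM
  have hMmono : ∀ {r r' : ℝ}, r ≤ r' → M r ≤ M r' := by
    intro r r' hrr
    exact eLpNormEssSup_mono_measure v (Measure.absolutelyContinuous_of_le
      (Measure.restrict_mono (Metric.ball_subset_ball hrr) le_rfl))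
  have hMtop : M R₀ < ⊤ := by
    refine lt_of_le_of_lt ?_ (hv (Metric.closedBall x₀ R₀) (isCompact_closedBall _ _) hsub)
    exact eLpNormEssSup_mono_measure v (Measure.absolutelyContinuous_of_le
      (Measure.restrict_mono Metric.ball_subset_closedBall le_rfl))
  set I : ℝ≥0∞ := ∫⁻ x in Metric.ball x₀ R₀, (‖v x‖₊ : ℝ≥0∞) ^ lam with hI
  have hItop : I < ⊤ := by
    have hb : ∀ᵐ x ∂(volume.restrict (Metric.ball x₀ R₀)),
        (‖v x‖₊ : ℝ≥0∞) ^ lam ≤ (M R₀) ^ lam := by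
      filter_upwards [enorm_ae_le_eLpNormEssSup v _] with x hx
      exact ENNReal.rpow_le_rpow hx hlam0.le
    calc I ≤ ∫⁻ _ in Metric.ball x₀ R₀, (M R₀) ^ lam := lintegral_mono_ae hb
      _ = (M R₀) ^ lam * volume (Metric.ball x₀ R₀) := by
          rw [lintegral_const, Measure.restrict_apply_univ]
      _ < ⊤ := ENNReal.mul_lt_top
          (ENNReal.rpow_lt_top_of_nonneg hlam0.le hMtop.ne) measure_ball_lt_top
  -- interpolation of the integral
  have hint : ∀ R : ℝ, R ≤ R₀ → (∫⁻ x in Metric.ball x₀ R, (‖v x‖₊ : ℝ≥0∞))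
      ≤ M R ^ (1 - lam) * I := by
    intro R hR
    have hMR : M R ≠ ⊤ := (lt_of_le_of_lt (hMmono hR) hMtop).ne
    have hb : ∀ᵐ x ∂(volume.restrict (Metric.ball x₀ R)),
        (‖v x‖₊ : ℝ≥0∞) ≤ M R ^ (1 - lam) * (‖v x‖₊ : ℝ≥0∞) ^ lam := by
      filter_upwards [enorm_ae_le_eLpNormEssSup v _] with x hx
      rcases eq_or_ne (‖v x‖₊ : ℝ≥0∞) 0 with h0 | h0
      · simp [h0]
      · have heq : (‖v x‖₊ : ℝ≥0∞) = (‖v x‖₊ : ℝ≥0∞) ^ (1 - lam) * (‖v x‖₊ : ℝ≥0∞) ^ lam := by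
          rw [← ENNReal.rpow_add _ _ h0 ENNReal.coe_ne_top,
            show 1 - lam + lam = (1:ℝ) by ring, ENNReal.rpow_one]
        refine heq.le.trans ?_
        exact mul_le_mul_left (ENNReal.rpow_le_rpow hx (by linarith)) _
    calc (∫⁻ x in Metric.ball x₀ R, (‖v x‖₊ : ℝ≥0∞))
        ≤ ∫⁻ x in Metric.ball x₀ R, M R ^ (1 - lam) * (‖v x‖₊ : ℝ≥0∞) ^ lam :=
          lintegral_mono_ae hb
      _ = M R ^ (1 - lam) * ∫⁻ x in Metric.ball x₀ R, (‖v x‖₊ : ℝ≥0∞) ^ lam :=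
          lintegral_const_mul' _ _ (ENNReal.rpow_ne_top_of_nonneg (by linarith) hMR)
      _ ≤ M R ^ (1 - lam) * I :=
          mul_le_mul_right
            (lintegral_mono' (Measure.restrict_mono (Metric.ball_subset_ball hR) le_rfl)
              le_rfl) _
  -- weights and supremum
  set W : ℝ → ℝ≥0∞ := fun ρ => ENNReal.ofReal ((R₀ - ρ) ^ γ) with hW
  set S : ℝ≥0∞ := ⨆ ρ : Set.Ico ρ₀ R₀, W ρ * M ρ with hS
  have hWS : ∀ {ρ : ℝ}, ρ ∈ Set.Ico ρ₀ R₀ → W ρ * M ρ ≤ S := by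
    intro ρ hρ
    exact le_iSup (fun ρ : Set.Ico ρ₀ R₀ => W ρ * M ρ) ⟨ρ, hρ⟩
  have hStop : S ≠ ⊤ := by
    have hSle : S ≤ ENNReal.ofReal ((R₀ - ρ₀) ^ γ) * M R₀ := by
      refine iSup_le ?_
      rintro ⟨ρ, hρ⟩
      show W ρ * M ρ ≤ _
      refine mul_le_mul' (ENNReal.ofReal_le_ofReal
        (Real.rpow_le_rpow (by linarith [hρ.2]) (by linarith [hρ.1]) hγ0)) (hMmono hρ.2.le)
    exact (lt_of_le_of_lt hSle (ENNReal.mul_lt_top ENNReal.ofReal_lt_top hMtop)).ne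
  -- the recursive inequality
  set B : ℝ≥0∞ := ENNReal.ofReal (c ^ θ * 2 ^ γ) * I ^ θ with hB
  have hSB : S ≤ B * S ^ α := by
    rw [hS]
    refine iSup_le ?_
    rintro ⟨ρ, hρ⟩
    show W ρ * M ρ ≤ B * S ^ α
    set R : ℝ := (ρ + R₀)/2 with hRdef
    have hρR : ρ < R := by rw [hRdef]; linarith [hρ.2]
    have hRR₀ : R < R₀ := by rw [hRdef]; linarith [hρ.2]
    have hRmem : R ∈ Set.Ico ρ₀ R₀ := ⟨by rw [hRdef]; linarith [hρ.1], hRR₀⟩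
    have hρpos : 0 < ρ := lt_of_lt_of_le hρ₀ hρ.1
    have hsub' : Metric.closedBall x₀ R ⊆ Ω :=
      (Metric.closedBall_subset_closedBall hRR₀.le).trans hsub
    have h1 : M ρ ^ (1/θ) ≤ ENNReal.ofReal (c / (R - ρ)^n) * (M R ^ (1 - lam) * I) :=
      le_trans (h ρ R hρpos hρR hsub') (mul_le_mul_right (hint R hRR₀.le) _)
    have h2 := ENNReal.rpow_le_rpow h1 hθ0.le
    rw [← ENNReal.rpow_mul, one_div_mul_cancel hθ0.ne', ENNReal.rpow_one,
      ENNReal.mul_rpow_of_nonneg _ _ hθ0.le, ENNReal.mul_rpow_of_nonneg _ _ hθ0.le,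
      ← ENNReal.rpow_mul, show (1 - lam) * θ = α by rw [hαdef]; ring] at h2
    -- bound M R ^ α by the supremum
    have hd : 0 < R₀ - ρ := by linarith [hρ.2]
    have he : 0 < R₀ - R := by linarith
    have hWR0 : W R ≠ 0 := by
      simp only [hW, ne_eq, ENNReal.ofReal_eq_zero, not_le]
      exact Real.rpow_pos_of_pos he γ
    have hMRS : M R ≤ (W R)⁻¹ * S := by
      calc M R = (W R)⁻¹ * (W R * M R) := by
            rw [← mul_assoc, ENNReal.inv_mul_cancel hWR0 ENNReal.ofReal_ne_top, one_mul]
        _ ≤ (W R)⁻¹ * S := mul_le_mul_right (hWS hRmem) _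
    have hMRα : M R ^ α ≤ ((W R)⁻¹) ^ α * S ^ α := by
      rw [← ENNReal.mul_rpow_of_nonneg _ _ hα0.le]
      exact ENNReal.rpow_le_rpow hMRS hα0.le
    -- scalar computation
    have hRρ : R - ρ = (R₀ - ρ)/2 := by rw [hRdef]; ring
    have hR₀R : R₀ - R = (R₀ - ρ)/2 := by rw [hRdef]; ring
    have hehalf : (0:ℝ) < (R₀ - ρ)/2 := by linarith
    have hscal : W ρ * (ENNReal.ofReal (c / (R - ρ)^n)) ^ θ * ((W R)⁻¹) ^ α
        = ENNReal.ofReal (c ^ θ * 2 ^ γ) := by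
      have hq : 0 < c / (R - ρ)^n := by
        rw [hRρ]; positivity
      simp only [hW]
      rw [ENNReal.ofReal_rpow_of_pos hq,
        ← ENNReal.ofReal_inv_of_pos (Real.rpow_pos_of_pos he γ),
        ENNReal.ofReal_rpow_of_pos (by positivity),
        ← ENNReal.ofReal_mul (by positivity),
        ← ENNReal.ofReal_mul (by positivity)]
      congr 1
      rw [hRρ, hR₀R]
      set e : ℝ := (R₀ - ρ)/2 with hedef
      have he0 : 0 < e := hehalf
      rw [show R₀ - ρ = 2 * e by rw [hedef]; ring]
      rw [Real.mul_rpow (by norm_num) he0.le,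
        Real.div_rpow hc.le (pow_nonneg he0.le n),
        ← Real.rpow_natCast e n, ← Real.rpow_mul he0.le,
        ← Real.rpow_neg he0.le, ← Real.rpow_mul he0.le,
        div_eq_mul_inv (c ^ θ), ← Real.rpow_neg he0.le]
      have hre : (2:ℝ) ^ γ * e ^ γ * (c ^ θ * e ^ (-((n:ℝ) * θ))) * e ^ (-γ * α)
          = c ^ θ * 2 ^ γ * (e ^ γ * e ^ (-((n:ℝ) * θ)) * e ^ (-γ * α)) := by ring
      rw [hre, ← Real.rpow_add he0, ← Real.rpow_add he0,
        show γ + -((n:ℝ) * θ) + -γ * α = γ * (1 - α) - n * θ by ring, hγ1, sub_self,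
        Real.rpow_zero, mul_one]
    calc W ρ * M ρ
        ≤ W ρ * ((ENNReal.ofReal (c / (R - ρ)^n)) ^ θ * (M R ^ α * I ^ θ)) :=
          mul_le_mul_right h2 _
      _ ≤ W ρ * ((ENNReal.ofReal (c / (R - ρ)^n)) ^ θ * ((((W R)⁻¹) ^ α * S ^ α) * I ^ θ)) :=
          mul_le_mul_right (mul_le_mul_right (mul_le_mul_left hMRα _) _) _
      _ = (W ρ * (ENNReal.ofReal (c / (R - ρ)^n)) ^ θ * ((W R)⁻¹) ^ α) * (I ^ θ * S ^ α) := by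
          ring
      _ = B * S ^ α := by rw [hscal, hB, mul_assoc]
  -- absorb
  have hSfinal : S ≤ B ^ (1/(1-α)) := by
    rcases eq_or_ne S 0 with h0 | h0
    · simp [h0]
    · have hS1 : S ^ (1 - α) ≤ B := by
        have h4 : S ^ ((1:ℝ) + -α) ≤ B * S ^ (α + -α) := by
          rw [ENNReal.rpow_add _ _ h0 hStop, ENNReal.rpow_add _ _ h0 hStop,
            ENNReal.rpow_one, ← mul_assoc]
          exact mul_le_mul_left hSB _
        rw [show (1:ℝ) + -α = 1 - α by ring, show α + -α = (0:ℝ) by ring,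
          ENNReal.rpow_zero, mul_one] at h4
        exact h4
      have h3 := ENNReal.rpow_le_rpow hS1 (by positivity : (0:ℝ) ≤ 1/(1-α))
      rwa [← ENNReal.rpow_mul, mul_one_div, div_self h1α.ne', ENNReal.rpow_one] at h3
  -- conclude
  have hρ₀mem : ρ₀ ∈ Set.Ico ρ₀ R₀ := ⟨le_refl _, hρR₀⟩
  have hd₀ : 0 < R₀ - ρ₀ := by linarith
  have hWρ₀0 : W ρ₀ ≠ 0 := by
    simp only [hW, ne_eq, ENNReal.ofReal_eq_zero, not_le]
    exact Real.rpow_pos_of_pos hd₀ γ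
  have hMρ₀ : M ρ₀ ≤ (W ρ₀)⁻¹ * B ^ (1/(1-α)) := by
    calc M ρ₀ = (W ρ₀)⁻¹ * (W ρ₀ * M ρ₀) := by
          rw [← mul_assoc, ENNReal.inv_mul_cancel hWρ₀0 ENNReal.ofReal_ne_top, one_mul]
      _ ≤ (W ρ₀)⁻¹ * S := mul_le_mul_right (hWS hρ₀mem) _
      _ ≤ (W ρ₀)⁻¹ * B ^ (1/(1-α)) := mul_le_mul_right hSfinal _
  have he₀ : (0:ℝ) ≤ (1 - α)/θ := by positivity
  have hfin := ENNReal.rpow_le_rpow hMρ₀ he₀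
  rw [ENNReal.mul_rpow_of_nonneg _ _ he₀, ← ENNReal.rpow_mul,
    show 1/(1-α) * ((1 - α)/θ) = 1/θ by field_simp] at hfin
  have hB1θ : B ^ ((1:ℝ)/θ) = ENNReal.ofReal (c * 2 ^ ((n:ℝ)/(1-α))) * I := by
    rw [hB, ENNReal.mul_rpow_of_nonneg _ _ (by positivity : (0:ℝ) ≤ 1/θ),
      ← ENNReal.rpow_mul, show θ * (1/θ) = (1:ℝ) by field_simp, ENNReal.rpow_one,
      ENNReal.ofReal_rpow_of_pos (by positivity)]
    congr 2
    rw [Real.mul_rpow (by positivity) (by positivity), ← Real.rpow_mul hc.le,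
      ← Real.rpow_mul (by norm_num : (0:ℝ) ≤ 2),
      show θ * (1/θ) = (1:ℝ) by field_simp, Real.rpow_one,
      show γ * (1/θ) = (n:ℝ)/(1-α) by rw [hγdef]; field_simp]
  rw [hB1θ] at hfin
  refine le_trans hfin (le_of_eq ?_)
  simp only [hW]
  rw [← ENNReal.ofReal_inv_of_pos (Real.rpow_pos_of_pos hd₀ γ),
    ENNReal.ofReal_rpow_of_pos (by positivity),
    ← mul_assoc, ← ENNReal.ofReal_mul (by positivity)]
  congr 1
  have hexp : -γ * ((1 - α)/θ) = -(n:ℝ) := by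
    field_simp
    nlinarith [hγ1]
  rw [← Real.rpow_neg hd₀.le, ← Real.rpow_mul hd₀.le, hexp,
    Real.rpow_neg hd₀.le, Real.rpow_natCast]
  rw [div_eq_mul_inv]
  ring
end

section
/- Let f : ℝ^n → ℝ be positive and of class C² on {ξ : |ξ| ≥ 1}, satisfying Σ_{i,j} f_{ξ_i ξ_j}(ξ) λ_i λ_j ≤ M|ξ|^{q-2}|λ|² for all λ, ξ with |ξ| ≥ 1, where M > 0 and q > 1. Then there exists t̄ ≥ 1 such that f(ξ) ≤ (2M/(q-1)) |ξ|^q for all |ξ| ≥ t̄. -/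
open Set

lemma mvt_aux {g F g' F' : ℝ → ℝ} {a b : ℝ} (hab : a ≤ b)
    (hg : ∀ s ∈ Icc a b, HasDerivAt g (g' s) s)
    (hF : ∀ s ∈ Icc a b, HasDerivAt F (F' s) s)
    (hle : ∀ s ∈ Icc a b, g' s ≤ F' s) :
    g b - g a ≤ F b - F a := by
  have key : MonotoneOn (fun s => F s - g s) (Icc a b) := by
    apply monotoneOn_of_deriv_nonneg (convex_Icc a b)
    · exact fun s hs => ((hF s hs).sub (hg s hs)).continuousAt.continuousWithinAt
    · intro s hs
      rw [interior_Icc] at hs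
      exact ((hF s (Ioo_subset_Icc_self hs)).sub
        (hg s (Ioo_subset_Icc_self hs))).differentiableAt.differentiableWithinAt
    · intro s hs
      rw [interior_Icc] at hs
      rw [show (fun s => F s - g s) = F - g from rfl, ((hF s (Ioo_subset_Icc_self hs)).sub (hg s (Ioo_subset_Icc_self hs))).deriv]
      exact sub_nonneg.2 (hle s (Ioo_subset_Icc_self hs))
  have h2 := key (left_mem_Icc.2 hab) (right_mem_Icc.2 hab) hab
  simp only at h2
  linarith

set_option maxHeartbeats 1000000 in
theorem upper_growth_from_ellipticity {n : ℕ}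
    (f : EuclideanSpace ℝ (Fin n) → ℝ) (M q : ℝ) (hM : 0 < M) (hq : 1 < q)
    (hpos : ∀ ξ, 0 < f ξ)
    (hreg : ContDiffOn ℝ 2 f {ξ : EuclideanSpace ℝ (Fin n) | 1 ≤ ‖ξ‖})
    (hess : ∀ ξ lam : EuclideanSpace ℝ (Fin n), 1 ≤ ‖ξ‖ →
      fderiv ℝ (fun x => fderiv ℝ f x lam) ξ lam ≤ M * ‖ξ‖ ^ (q - 2) * ‖lam‖ ^ 2) :
    ∃ tbar : ℝ, 1 ≤ tbar ∧ ∀ ξ : EuclideanSpace ℝ (Fin n), tbar ≤ ‖ξ‖ →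
      f ξ ≤ 2 * M / (q - 1) * ‖ξ‖ ^ q := by
  have hq1 : (0:ℝ) < q - 1 := by linarith
  have hq1' : q - 1 ≠ 0 := ne_of_gt hq1
  have hq0 : (0:ℝ) < q := by linarith
  set U : Set (EuclideanSpace ℝ (Fin n)) := {x | 1 < ‖x‖} with hU_def
  have hUopen : IsOpen U := isOpen_lt continuous_const continuous_norm
  have hreg' : ContDiffOn ℝ 2 f U := hreg.mono (fun x hx => le_of_lt (show 1 < ‖x‖ from hx))
  have hdiff : ∀ x ∈ U, DifferentiableAt ℝ f x := fun x hx =>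
    (hreg'.differentiableOn (by norm_num)).differentiableAt (hUopen.mem_nhds hx)
  have hfd1 : ContDiffOn ℝ 1 (fderiv ℝ f) U :=
    hreg'.fderiv_of_isOpen hUopen (by norm_num)
  have hfderiv_cont : ContinuousOn (fderiv ℝ f) U := hfd1.continuousOn
  have hfderiv_diff : ∀ x ∈ U, DifferentiableAt ℝ (fderiv ℝ f) x := fun x hx =>
    (hfd1.differentiableOn (by norm_num)).differentiableAt (hUopen.mem_nhds hx)
  -- bounds on the sphere of radius 2
  have hsphU : Metric.sphere (0:EuclideanSpace ℝ (Fin n)) 2 ⊆ U := by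
    intro x hx
    rw [mem_sphere_zero_iff_norm] at hx
    simp only [hU_def, mem_setOf_eq, hx]; norm_num
  obtain ⟨A, hA⟩ := (isCompact_sphere (0:EuclideanSpace ℝ (Fin n)) 2).exists_bound_of_continuousOn
    (hreg.continuousOn.mono (fun x hx => le_of_lt (show 1 < ‖x‖ from hsphU hx)))
  obtain ⟨B, hB⟩ := (isCompact_sphere (0:EuclideanSpace ℝ (Fin n)) 2).exists_bound_of_continuousOn
    (hfderiv_cont.mono hsphU)
  set A' : ℝ := max A 0 with hA'_def
  set B' : ℝ := max B 0 with hB'_def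
  have hA'0 : 0 ≤ A' := le_max_right _ _
  have hB'0 : 0 ≤ B' := le_max_right _ _
  set C : ℝ := M / (q - 1) with hC_def
  have hC0 : 0 < C := div_pos hM hq1
  set K : ℝ := max 1 ((A' + B') / C) with hK_def
  have hK1 : (1:ℝ) ≤ K := le_max_left _ _
  have hK0 : (0:ℝ) ≤ K := by linarith
  refine ⟨max 2 (K ^ (1/(q-1))), le_trans (by norm_num) (le_max_left _ _), ?_⟩
  intro ξ hξ
  set t : ℝ := ‖ξ‖ with ht_def
  have ht2 : (2:ℝ) ≤ t := le_trans (le_max_left _ _) hξ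
  have ht0 : (0:ℝ) < t := by linarith
  have htK : K ^ (1/(q-1)) ≤ t := le_trans (le_max_right _ _) hξ
  set ω : EuclideanSpace ℝ (Fin n) := t⁻¹ • ξ with hω_def
  have hωnorm : ‖ω‖ = 1 := by
    rw [hω_def, norm_smul, norm_inv, Real.norm_eq_abs, abs_of_pos ht0, ← ht_def]
    field_simp
  have hsω : ∀ s : ℝ, 0 ≤ s → ‖s • ω‖ = s := by
    intro s hs
    rw [norm_smul, Real.norm_eq_abs, abs_of_nonneg hs, hωnorm, mul_one]
  have hmemU : ∀ s : ℝ, 1 < s → (s • ω) ∈ U := by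
    intro s hs
    simp only [hU_def, mem_setOf_eq, hsω s (by linarith)]
    exact hs
  have hsph2 : (2:ℝ) • ω ∈ Metric.sphere (0:EuclideanSpace ℝ (Fin n)) 2 := by
    rw [mem_sphere_zero_iff_norm, hsω 2 (by norm_num)]
  set g : ℝ → ℝ := fun s => f (s • ω) with hg_def
  set g1 : ℝ → ℝ := fun s => fderiv ℝ f (s • ω) ω with hg1_def
  set g2 : ℝ → ℝ := fun s => fderiv ℝ (fun x => fderiv ℝ f x ω) (s • ω) ω with hg2_def
  have hc : ∀ s : ℝ, HasDerivAt (fun u : ℝ => u • ω) ω s := fun s => by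
    simpa using (hasDerivAt_id s).smul_const ω
  have hg_deriv : ∀ s, 1 < s → HasDerivAt g (g1 s) s := fun s hs =>
    ((hdiff _ (hmemU s hs)).hasFDerivAt.comp_hasDerivAt s (hc s))
  have hg1_deriv : ∀ s, 1 < s → HasDerivAt g1 (g2 s) s := by
    intro s hs
    have hφ : DifferentiableAt ℝ (fun x => fderiv ℝ f x ω) (s • ω) :=
      ((ContinuousLinearMap.apply ℝ ℝ ω).differentiableAt).comp _ (hfderiv_diff _ (hmemU s hs))
    exact hφ.hasFDerivAt.comp_hasDerivAt s (hc s)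
  have hg2_le : ∀ s : ℝ, 1 ≤ s → g2 s ≤ M * s ^ (q - 2) := by
    intro s hs
    have := hess (s • ω) ω (by rw [hsω s (by linarith)]; exact hs)
    rwa [hsω s (by linarith), hωnorm, one_pow, mul_one] at this
  -- Step 1 : bound g1 on [2, t]
  have hg1_bound : ∀ s ∈ Icc (2:ℝ) t, g1 s ≤ B' + C * s ^ (q - 1) := by
    intro s hs
    have h2s : (2:ℝ) ≤ s := hs.1
    have key := mvt_aux (g := g1) (g' := g2)
      (F := fun u => C * u ^ (q - 1)) (F' := fun u => M * u ^ (q - 2)) h2s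
      (fun u hu => hg1_deriv u (by linarith [hu.1]))
      (fun u hu => by
        have hu0 : u ≠ 0 := by intro h; rw [h] at hu; linarith [hu.1]
        have := (Real.hasDerivAt_rpow_const (p := q - 1) (Or.inl hu0)).const_mul C
        refine this.congr_deriv ?_
        rw [hC_def]
        have : q - 1 - 1 = q - 2 := by ring
        rw [this]
        field_simp)
      (fun u hu => hg2_le u (by linarith [hu.1]))
    have hg12 : g1 2 ≤ B' := by
      have h1 : g1 2 ≤ ‖fderiv ℝ f ((2:ℝ) • ω) ω‖ := le_trans (le_abs_self _) (le_refl _)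
      have h2 : ‖fderiv ℝ f ((2:ℝ) • ω) ω‖ ≤ ‖fderiv ℝ f ((2:ℝ) • ω)‖ * ‖ω‖ :=
        ContinuousLinearMap.le_opNorm _ _
      have h3 := hB _ hsph2
      rw [hωnorm, mul_one] at h2
      calc g1 2 ≤ ‖fderiv ℝ f ((2:ℝ) • ω)‖ := le_trans h1 h2
        _ ≤ B := h3
        _ ≤ B' := le_max_left _ _
    have h2pow : (0:ℝ) ≤ (2:ℝ) ^ (q - 1) := Real.rpow_nonneg (by norm_num) _
    have key' : g1 s - g1 2 ≤ C * s ^ (q - 1) - C * 2 ^ (q - 1) := key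
    nlinarith [mul_nonneg hC0.le h2pow]
  -- Step 2 : bound g on [2, t]
  have hg_bound : g t - g 2 ≤ B' * (t - 2) + C / q * (t ^ q - 2 ^ q) := by
    have key := mvt_aux (g := g) (g' := g1)
      (F := fun u => B' * u + C / q * u ^ q) (F' := fun u => B' + C * u ^ (q - 1)) ht2
      (fun u hu => hg_deriv u (by linarith [hu.1]))
      (fun u hu => by
        have hu0 : u ≠ 0 := by intro h; rw [h] at hu; linarith [hu.1]
        have h1 := (hasDerivAt_id u).const_mul B'
        have h2 := (Real.hasDerivAt_rpow_const (p := q) (Or.inl hu0)).const_mul (C / q)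
        have := h1.add h2
        refine this.congr_deriv ?_
        field_simp)
      (fun u hu => hg1_bound u hu)
    linarith [key]
  -- assemble
  have hξeq : t • ω = ξ := by
    rw [hω_def, smul_smul, mul_inv_cancel₀ (ne_of_gt ht0), one_smul]
  have hfξ : f ξ = g t := by rw [hg_def]; simp [hξeq]
  have hg2A : g 2 ≤ A' := by
    have := hA _ hsph2
    calc g 2 ≤ |f ((2:ℝ) • ω)| := le_abs_self _
      _ ≤ A := by simpa [Real.norm_eq_abs] using this
      _ ≤ A' := le_max_left _ _
  -- final arithmetic
  have htq1 : (A' + B') / C ≤ t ^ (q - 1) := by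
    have h1 : (K ^ (1/(q-1))) ^ (q - 1) ≤ t ^ (q - 1) :=
      Real.rpow_le_rpow (Real.rpow_nonneg hK0 _) htK hq1.le
    have h2 : (K ^ (1/(q-1))) ^ (q - 1) = K := by
      rw [← Real.rpow_mul hK0, one_div, inv_mul_cancel₀ hq1', Real.rpow_one]
    rw [h2] at h1
    exact le_trans (le_max_right _ _) h1
  have htpow : t ^ (q - 1) * t = t ^ q := by
    nth_rewrite 2 [← Real.rpow_one t]
    rw [← Real.rpow_add ht0]
    norm_num
  have htq0 : (0:ℝ) ≤ t ^ q := Real.rpow_nonneg ht0.le q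
  have hAB_le : A' + B' * t ≤ C * t ^ q := by
    have h1 : A' + B' ≤ t ^ (q - 1) * C := (div_le_iff₀ hC0).1 htq1
    have htq10 : (0:ℝ) ≤ t ^ (q - 1) := Real.rpow_nonneg ht0.le _
    calc A' + B' * t ≤ (A' + B') * t := by nlinarith
      _ ≤ (t ^ (q - 1) * C) * t := by nlinarith
      _ = C * (t ^ (q - 1) * t) := by ring
      _ = C * t ^ q := by rw [htpow]
  have hCq : C / q * t ^ q ≤ C * t ^ q := by
    have h : C / q ≤ C := by
      rw [div_le_iff₀ hq0]; nlinarith [hC0.le, hq]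
    exact mul_le_mul_of_nonneg_right h htq0
  have h2q : (0:ℝ) ≤ (2:ℝ) ^ q := Real.rpow_nonneg (by norm_num) _
  have hCq0 : (0:ℝ) ≤ C / q := le_of_lt (div_pos hC0 hq0)
  have hfinal : 2 * M / (q - 1) = 2 * C := by rw [hC_def]; ring
  have hg_bound2 : g t ≤ g 2 + B' * t - 2 * B' + C / q * t ^ q - C / q * 2 ^ q := by
    have h : B' * (t - 2) + C / q * (t ^ q - 2 ^ q)
        = B' * t - 2 * B' + C / q * t ^ q - C / q * 2 ^ q := by ring
    linarith [hg_bound, h.le, h.ge]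
  rw [hfξ, hfinal]
  linarith [hg_bound2, hg2A, hAB_le, hCq, mul_nonneg hCq0 h2q, hB'0]
end

section
/- Let f : ℝ^n → ℝ be positive and of class C² on {ξ : |ξ| ≥ 1}, satisfying m|ξ|^{-1}|λ|² ≤ Σ_{i,j} f_{ξ_i ξ_j}(ξ) λ_i λ_j for all λ, ξ with |ξ| ≥ 1, where m > 0 (the case p = 1). Then there exists t̄ ≥ 1 such that f(ξ) ≥ (m/2) |ξ| log|ξ| for all |ξ| ≥ t̄. -/
open Real Set


/-- 1-D lemma: if g > 0 on (1,∞), g'' ≥ m/t, and g(3/2) ≤ C, then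
g grows like m t log t. -/
lemma oned_growth (m C : ℝ) (hm : 0 < m) (hC : 0 ≤ C) (g φ ψ : ℝ → ℝ)
    (hgpos : ∀ t, 1 < t → 0 < g t)
    (hg' : ∀ t, 1 < t → HasDerivAt g (φ t) t)
    (hφ' : ∀ t, 1 < t → HasDerivAt φ (ψ t) t)
    (hψ : ∀ t, 1 < t → m * t⁻¹ ≤ ψ t)
    (hg32 : g (3/2) ≤ C)
    (t : ℝ) (ht2 : 2 ≤ t)
    (htA : Real.exp (2 * (m + 2*C + m * Real.log 2) / m) ≤ t) :
    m/2 * t * Real.log t ≤ g t := by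
  set A : ℝ := m + 2*C + m * Real.log 2 with hA
  -- continuity facts
  have hgc : ∀ s ∈ Icc (3/2 : ℝ) 2, ContinuousWithinAt g (Icc (3/2 : ℝ) 2) s := by
    intro s hs
    exact ((hg' s (by linarith [hs.1])).continuousAt).continuousWithinAt
  have hφc : ∀ s : ℝ, (3/2 : ℝ) ≤ s → ContinuousAt φ s := fun s hs =>
    (hφ' s (by linarith)).continuousAt
  -- φ monotone on [3/2, ∞)
  have hφmono : MonotoneOn φ (Ici (3/2 : ℝ)) := by
    apply monotoneOn_of_deriv_nonneg (convex_Ici _)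
      (fun s hs => (hφc s hs).continuousWithinAt)
    · intro s hs
      rw [interior_Ici] at hs
      exact (hφ' s (by exact lt_trans (by norm_num) hs)).differentiableAt.differentiableWithinAt
    · intro s hs
      rw [interior_Ici] at hs
      have hs1 : (1:ℝ) < s := lt_trans (by norm_num) hs
      rw [(hφ' s hs1).deriv]
      have := hψ s hs1
      have : 0 < m * s⁻¹ := by positivity
      linarith [hψ s hs1]
  -- φ 2 ≥ -2C via MVT
  have hφ2 : -(2*C) ≤ φ 2 := by
    obtain ⟨c, hc, hceq⟩ := exists_hasDerivAt_eq_slope g φ (by norm_num : (3/2:ℝ) < 2)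
      hgc (fun s hs => hg' s (by linarith [hs.1]))
    have h1 : φ c = (g 2 - g (3/2)) / (2 - 3/2) := hceq
    have h2 : φ c ≤ φ 2 := hφmono (le_of_lt hc.1) (by norm_num) (le_of_lt hc.2)
    have hg2 : 0 < g 2 := hgpos 2 (by norm_num)
    rw [h1] at h2
    have h3 : g 2 - g (3/2) ≤ φ 2 * (2 - 3/2) := (div_le_iff₀ (by norm_num)).mp h2
    nlinarith
  -- φ t ≥ m log t + c₀ for t ≥ 2, where c₀ = -2C - m log 2
  have hφlower : ∀ s : ℝ, 2 ≤ s → m * Real.log s + (-(2*C) - m * Real.log 2) ≤ φ s := by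
    have hmono : MonotoneOn (fun s => φ s - m * Real.log s) (Ici (2:ℝ)) := by
      apply monotoneOn_of_deriv_nonneg (convex_Ici _)
      · intro s hs
        exact ((hφc s (by simp at hs; linarith)).sub
          (((Real.continuousAt_log (by simp at hs; linarith)).const_smul m))).continuousWithinAt
      · intro s hs
        rw [interior_Ici] at hs
        have hs1 : (1:ℝ) < s := lt_trans one_lt_two hs
        exact ((hφ' s hs1).sub ((Real.hasDerivAt_log (by linarith)).const_mul m)).differentiableAt.differentiableWithinAt
      · intro s hs
        rw [interior_Ici] at hs
        have hs1 : (1:ℝ) < s := lt_trans one_lt_two hs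
        rw [HasDerivAt.deriv (f := fun s => φ s - m * Real.log s) ((hφ' s hs1).sub ((Real.hasDerivAt_log (by linarith)).const_mul m))]
        linarith [hψ s hs1]
    intro s hs
    have := hmono (mem_Ici.2 (le_refl (2:ℝ))) (mem_Ici.2 hs) hs
    simp only at this
    linarith
  set c₀ : ℝ := -(2*C) - m * Real.log 2 with hc₀
  -- G monotone on [2,∞)
  have hGaux : ∀ s : ℝ, 1 < s →
      HasDerivAt (fun u => g u - (m * (u * Real.log u - u) + c₀ * u))
        (φ s - (m * Real.log s + c₀)) s := by
    intro s hs
    have h1 : HasDerivAt (fun u : ℝ => u * Real.log u) (Real.log s + 1) s := by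
      have := (hasDerivAt_id s).mul (Real.hasDerivAt_log (by linarith))
      refine this.congr_deriv ?_
      have : s ≠ 0 := by linarith
      simp only [id]
      field_simp
    have h2 : HasDerivAt (fun u : ℝ => m * (u * Real.log u - u) + c₀ * u)
        (m * Real.log s + c₀) s := by
      have := ((h1.sub (hasDerivAt_id s)).const_mul m).add ((hasDerivAt_id s).const_mul c₀)
      refine this.congr_deriv ?_
      ring
    exact (hg' s hs).sub h2
  have hGmono : MonotoneOn (fun u => g u - (m * (u * Real.log u - u) + c₀ * u)) (Ici (2:ℝ)) := by
    apply monotoneOn_of_deriv_nonneg (convex_Ici _)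
    · intro s hs
      exact (hGaux s (by simp at hs; linarith)).continuousAt.continuousWithinAt
    · intro s hs
      rw [interior_Ici] at hs
      exact (hGaux s (lt_trans one_lt_two hs)).differentiableAt.differentiableWithinAt
    · intro s hs
      rw [interior_Ici] at hs
      rw [(hGaux s (lt_trans one_lt_two hs)).deriv]
      linarith [hφlower s (le_of_lt hs)]
  have hGt := hGmono (mem_Ici.2 (le_refl (2:ℝ))) (mem_Ici.2 ht2) ht2
  simp only at hGt
  -- unwind
  have hg2 : 0 < g 2 := hgpos 2 one_lt_two
  have hkey : m * (t * Real.log t) - A * t ≤ g t := by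
    have e1 : m * (t * Real.log t - t) + c₀ * t = m * (t * Real.log t) - A * t := by
      rw [hc₀, hA]; ring
    have e2 : m * (2 * Real.log 2 - 2) + c₀ * 2 = -2*m - 4*C := by
      rw [hc₀]; ring
    rw [e1, e2] at hGt
    linarith
  -- final step
  have ht0 : (0:ℝ) < t := by linarith
  have hlogt : 2 * A / m ≤ Real.log t := by
    rw [← Real.log_exp (2 * A / m)]
    exact Real.log_le_log (Real.exp_pos _) htA
  have hAt : A * t ≤ m / 2 * Real.log t * t := by
    apply mul_le_mul_of_nonneg_right _ (le_of_lt ht0)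
    rw [div_le_iff₀ hm] at hlogt
    nlinarith
  nlinarith [hkey, hAt]

open Real Set

lemma ray_derivs {n : ℕ} (f : EuclideanSpace ℝ (Fin n) → ℝ)
    (hreg : ContDiffOn ℝ 2 f {ξ : EuclideanSpace ℝ (Fin n) | 1 ≤ ‖ξ‖})
    (ξ₀ : EuclideanSpace ℝ (Fin n)) (hξ₀ : ‖ξ₀‖ = 1) (t : ℝ) (ht : 1 < t) :
    HasDerivAt (fun s : ℝ => f (s • ξ₀)) (fderiv ℝ f (t • ξ₀) ξ₀) t ∧
    HasDerivAt (fun s : ℝ => fderiv ℝ f (s • ξ₀) ξ₀)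
      (fderiv ℝ (fun x => fderiv ℝ f x ξ₀) (t • ξ₀) ξ₀) t := by
  have ht0 : (0:ℝ) < t := by linarith
  have hnorm : ‖t • ξ₀‖ = t := by
    rw [norm_smul, hξ₀, Real.norm_eq_abs, abs_of_pos ht0, mul_one]
  have hU : IsOpen {ξ : EuclideanSpace ℝ (Fin n) | 1 < ‖ξ‖} :=
    isOpen_lt continuous_const continuous_norm
  have hmem : t • ξ₀ ∈ {ξ : EuclideanSpace ℝ (Fin n) | 1 < ‖ξ‖} := by
    simp only [mem_setOf_eq, hnorm]; exact ht
  have hUS : {ξ : EuclideanSpace ℝ (Fin n) | 1 < ‖ξ‖} ⊆ {ξ : EuclideanSpace ℝ (Fin n) | 1 ≤ ‖ξ‖} :=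
    fun x hx => by simp only [mem_setOf_eq] at hx ⊢; exact le_of_lt hx
  have hCD : ContDiffAt ℝ 2 f (t • ξ₀) :=
    (hreg.mono hUS).contDiffAt (hU.mem_nhds hmem)
  have hdf : DifferentiableAt ℝ f (t • ξ₀) :=
    hCD.differentiableAt (by norm_num)
  have curve : HasDerivAt (fun s : ℝ => s • ξ₀) ξ₀ t := by
    simpa using (hasDerivAt_id t).smul_const ξ₀
  constructor
  · exact hdf.hasFDerivAt.comp_hasDerivAt t curve
  · have hCD1 : ContDiffAt ℝ 1 (fderiv ℝ f) (t • ξ₀) :=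
      hCD.fderiv_right (by norm_num)
    have hF : DifferentiableAt ℝ (fderiv ℝ f) (t • ξ₀) :=
      hCD1.differentiableAt (by norm_num)
    have h2 : HasFDerivAt (fun x => fderiv ℝ f x ξ₀)
        ((ContinuousLinearMap.apply ℝ ℝ ξ₀).comp (fderiv ℝ (fderiv ℝ f) (t • ξ₀)))
        (t • ξ₀) :=
      (ContinuousLinearMap.apply ℝ ℝ ξ₀).hasFDerivAt.comp _ hF.hasFDerivAt
    have h3 := h2.comp_hasDerivAt t curve
    rw [h2.fderiv]
    exact h3



theorem lower_growth_from_ellipticity_p_one {n : ℕ}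
    (f : EuclideanSpace ℝ (Fin n) → ℝ) (m : ℝ) (hm : 0 < m)
    (hpos : ∀ ξ, 0 < f ξ)
    (hreg : ContDiffOn ℝ 2 f {ξ : EuclideanSpace ℝ (Fin n) | 1 ≤ ‖ξ‖})
    (hess : ∀ ξ lam : EuclideanSpace ℝ (Fin n), 1 ≤ ‖ξ‖ →
      m * ‖ξ‖⁻¹ * ‖lam‖ ^ 2 ≤ fderiv ℝ (fun x => fderiv ℝ f x lam) ξ lam) :
    ∃ tbar : ℝ, 1 ≤ tbar ∧ ∀ ξ : EuclideanSpace ℝ (Fin n), tbar ≤ ‖ξ‖ →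
      m / 2 * ‖ξ‖ * Real.log ‖ξ‖ ≤ f ξ := by
  obtain ⟨C₀, hC₀⟩ :=
    (isCompact_sphere (0 : EuclideanSpace ℝ (Fin n)) (3/2)).exists_bound_of_continuousOn
      (hreg.continuousOn.mono (fun x hx => by
        rw [mem_sphere_zero_iff_norm] at hx
        simp only [mem_setOf_eq, hx]; norm_num))
  set C : ℝ := max C₀ 0 with hCdef
  have hC : 0 ≤ C := le_max_right _ _
  refine ⟨max 2 (Real.exp (2 * (m + 2*C + m * Real.log 2) / m)),
    le_trans one_le_two (le_max_left _ _), ?_⟩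
  intro ξ hξ
  have ht2 : 2 ≤ ‖ξ‖ := le_trans (le_max_left _ _) hξ
  have ht0 : (0:ℝ) < ‖ξ‖ := by linarith
  set ξ₀ : EuclideanSpace ℝ (Fin n) := ‖ξ‖⁻¹ • ξ with hξ₀def
  have hξ₀ : ‖ξ₀‖ = 1 := by
    rw [hξ₀def, norm_smul, Real.norm_eq_abs, abs_of_pos (inv_pos.2 ht0),
      inv_mul_cancel₀ (ne_of_gt ht0)]
  have hrestore : ‖ξ‖ • ξ₀ = ξ := smul_inv_smul₀ (ne_of_gt ht0) ξ
  have key := oned_growth m C hm hC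
    (fun t => f (t • ξ₀)) (fun t => fderiv ℝ f (t • ξ₀) ξ₀)
    (fun t => fderiv ℝ (fun x => fderiv ℝ f x ξ₀) (t • ξ₀) ξ₀)
    (fun t _ => hpos _)
    (fun t ht => (ray_derivs f hreg ξ₀ hξ₀ t ht).1)
    (fun t ht => (ray_derivs f hreg ξ₀ hξ₀ t ht).2)
    ?_ ?_ ‖ξ‖ ht2 (le_trans (le_max_right _ _) hξ)
  · simpa only [hrestore] using key
  · intro t ht
    have hnorm : ‖t • ξ₀‖ = t := by
      rw [norm_smul, hξ₀, Real.norm_eq_abs, abs_of_pos (by linarith), mul_one]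
    have h := hess (t • ξ₀) ξ₀ (by rw [hnorm]; linarith)
    rwa [hnorm, hξ₀, one_pow, mul_one] at h
  · have hmem : (3/2 : ℝ) • ξ₀ ∈ Metric.sphere (0 : EuclideanSpace ℝ (Fin n)) (3/2) := by
      rw [mem_sphere_zero_iff_norm, norm_smul, hξ₀, Real.norm_eq_abs]
      norm_num
    calc f ((3/2 : ℝ) • ξ₀) ≤ ‖f ((3/2 : ℝ) • ξ₀)‖ := le_abs_self _
      _ ≤ C₀ := hC₀ _ hmem
      _ ≤ C := le_max_left _ _
end

section
/- Let f(ξ) = Σ_{i=1}^n (1 + ξ_i²)^{p_i/2} with 1 < p_i ≤ 2 for all i, and let p = min_i p_i. Then for all λ, ξ ∈ ℝ^n, Σ_{i,j=1}^n f_{ξ_i ξ_j}(ξ) λ_i λ_j ≥ p(p-1)(1 + |ξ|²)^{(p-2)/2} |λ|². -/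
noncomputable def d1 (a t : ℝ) : ℝ := 2 * t * (a / 2) * (1 + t ^ 2) ^ (a / 2 - 1)

noncomputable def d2 (a t : ℝ) : ℝ :=
  2 * (a / 2) * (1 + t ^ 2) ^ (a / 2 - 1) +
    2 * t * (a / 2) * (2 * t * (a / 2 - 1) * (1 + t ^ 2) ^ (a / 2 - 1 - 1))

lemma hd1 (a t : ℝ) : HasDerivAt (fun t : ℝ => (1 + t ^ 2) ^ (a / 2)) (d1 a t) t := by
  have h0 : HasDerivAt (fun t : ℝ => 1 + t ^ 2) (2 * t) t := by
    simpa using (hasDerivAt_pow 2 t).const_add 1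
  have := h0.rpow_const (p := a / 2) (Or.inl (by positivity))
  simpa [d1, mul_assoc] using this

lemma hd2 (a t : ℝ) : HasDerivAt (fun t : ℝ => d1 a t) (d2 a t) t := by
  have h0 : HasDerivAt (fun t : ℝ => 1 + t ^ 2) (2 * t) t := by
    simpa using (hasDerivAt_pow 2 t).const_add 1
  have hv : HasDerivAt (fun t : ℝ => (1 + t ^ 2) ^ (a / 2 - 1))
      (2 * t * (a / 2 - 1) * (1 + t ^ 2) ^ (a / 2 - 1 - 1)) t :=
    h0.rpow_const (Or.inl (by positivity))
  have hu : HasDerivAt (fun t : ℝ => 2 * t * (a / 2)) (2 * (a / 2)) t := by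
    simpa using ((hasDerivAt_id t).const_mul 2).mul_const (a / 2)
  simpa [d1, d2] using hu.fun_mul hv

lemma d2_eq (a t : ℝ) : d2 a t = a * (1 + (a - 1) * t ^ 2) * (1 + t ^ 2) ^ (a / 2 - 2) := by
  have hpos : (0:ℝ) < 1 + t ^ 2 := by positivity
  have h1 : a / 2 - 1 = (a / 2 - 2) + 1 := by ring
  have h2 : a / 2 - 1 - 1 = a / 2 - 2 := by ring
  rw [d2, h2, h1, Real.rpow_add_one hpos.ne']
  ring

lemma key_ineq (a p S t : ℝ) (ha1 : 1 < a) (ha2 : a ≤ 2) (hp1 : 1 < p) (hpa : p ≤ a)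
    (hS : 0 ≤ S) (ht : t ^ 2 ≤ S) :
    p * (p - 1) * (1 + S) ^ ((p - 2) / 2) ≤ a * (1 + (a - 1) * t ^ 2) * (1 + t ^ 2) ^ (a / 2 - 2) := by
  have hpt : (0:ℝ) < 1 + t ^ 2 := by positivity
  have hS1 : (1:ℝ) ≤ 1 + S := by linarith
  have e1 : (1 + S) ^ ((p - 2) / 2) ≤ (1 + S) ^ (a / 2 - 1) := by
    apply Real.rpow_le_rpow_of_exponent_le hS1; linarith
  have e2 : (1 + S) ^ (a / 2 - 1) ≤ (1 + t ^ 2) ^ (a / 2 - 1) :=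
    Real.rpow_le_rpow_of_nonpos hpt (by linarith) (by linarith)
  have e3 : (1 + t ^ 2) ^ (a / 2 - 1) = (1 + t ^ 2) * (1 + t ^ 2) ^ (a / 2 - 2) := by
    have h1 : a / 2 - 1 = (a / 2 - 2) + 1 := by ring
    rw [h1, Real.rpow_add_one hpt.ne']; ring
  have hrp : (0:ℝ) < (1 + t ^ 2) ^ (a / 2 - 2) := Real.rpow_pos_of_pos hpt _
  have hrS : (0:ℝ) < (1 + S) ^ ((p - 2) / 2) := Real.rpow_pos_of_pos (by linarith) _
  have hpp : p * (p - 1) ≤ a * (a - 1) := by nlinarith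
  calc p * (p - 1) * (1 + S) ^ ((p - 2) / 2)
      ≤ a * (a - 1) * ((1 + t ^ 2) ^ (a / 2 - 1)) := by
        apply mul_le_mul hpp (e1.trans e2) hrS.le (by nlinarith)
    _ = a * ((a - 1) * (1 + t ^ 2)) * (1 + t ^ 2) ^ (a / 2 - 2) := by rw [e3]; ring
    _ ≤ a * (1 + (a - 1) * t ^ 2) * (1 + t ^ 2) ^ (a / 2 - 2) := by
        apply mul_le_mul_of_nonneg_right _ hrp.le
        apply mul_le_mul_of_nonneg_left _ (by linarith)
        nlinarith

theorem anisotropic_hessian_lower_bound {n : ℕ}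
    (P : Fin n → ℝ) (hP : ∀ i, 1 < P i ∧ P i ≤ 2)
    (p : ℝ) (hp : IsLeast (Set.range P) p)
    (f : EuclideanSpace ℝ (Fin n) → ℝ)
    (hf : f = fun ξ => ∑ i, (1 + (ξ i) ^ 2) ^ (P i / 2)) :
    ∀ ξ lam : EuclideanSpace ℝ (Fin n),
      p * (p - 1) * (1 + ‖ξ‖ ^ 2) ^ ((p - 2) / 2) * ‖lam‖ ^ 2
        ≤ fderiv ℝ (fun x => fderiv ℝ f x lam) ξ lam := by
  obtain ⟨⟨i0, hi0⟩, hlb⟩ := hp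
  have hp1 : 1 < p := hi0 ▸ (hP i0).1
  have hpa : ∀ i, p ≤ P i := fun i => hlb ⟨i, rfl⟩
  intro ξ lam
  have hf1 : ∀ x : EuclideanSpace ℝ (Fin n), HasFDerivAt f
      (∑ i, (d1 (P i) (x i)) • (EuclideanSpace.proj i : EuclideanSpace ℝ (Fin n) →L[ℝ] ℝ)) x := by
    intro x
    rw [hf]
    apply HasFDerivAt.fun_sum
    intro i _
    have hproj : HasFDerivAt (fun y : EuclideanSpace ℝ (Fin n) => y i)
        (EuclideanSpace.proj i : EuclideanSpace ℝ (Fin n) →L[ℝ] ℝ) x :=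
      (EuclideanSpace.proj i : EuclideanSpace ℝ (Fin n) →L[ℝ] ℝ).hasFDerivAt
    exact (hd1 (P i) (x i)).comp_hasFDerivAt x hproj
  have hF : (fun x : EuclideanSpace ℝ (Fin n) => fderiv ℝ f x lam)
      = fun x => ∑ i, d1 (P i) (x i) * lam i := by
    funext x
    rw [(hf1 x).fderiv]
    simp
  rw [hF]
  have hf2 : HasFDerivAt (fun x : EuclideanSpace ℝ (Fin n) => ∑ i, d1 (P i) (x i) * lam i)
      (∑ i, (d2 (P i) (ξ i) * lam i) • (EuclideanSpace.proj i : EuclideanSpace ℝ (Fin n) →L[ℝ] ℝ)) ξ := by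
    apply HasFDerivAt.fun_sum
    intro i _
    have hproj : HasFDerivAt (fun y : EuclideanSpace ℝ (Fin n) => y i)
        (EuclideanSpace.proj i : EuclideanSpace ℝ (Fin n) →L[ℝ] ℝ) ξ :=
      (EuclideanSpace.proj i : EuclideanSpace ℝ (Fin n) →L[ℝ] ℝ).hasFDerivAt
    exact ((hd2 (P i) (ξ i)).mul_const (lam i)).comp_hasFDerivAt ξ hproj
  rw [hf2.fderiv]
  simp only [ContinuousLinearMap.sum_apply, ContinuousLinearMap.smul_apply,
    PiLp.proj_apply, smul_eq_mul]
  have hnl : ‖lam‖ ^ 2 = ∑ i, (lam i) ^ 2 := by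
    rw [EuclideanSpace.norm_eq, Real.sq_sqrt (by positivity)]
    simp [sq_abs]
  have hnx : ‖ξ‖ ^ 2 = ∑ i, (ξ i) ^ 2 := by
    rw [EuclideanSpace.norm_eq, Real.sq_sqrt (by positivity)]
    simp [sq_abs]
  rw [hnl, Finset.mul_sum]
  apply Finset.sum_le_sum
  intro i _
  have ht : (ξ i) ^ 2 ≤ ‖ξ‖ ^ 2 := by
    rw [hnx]
    exact Finset.single_le_sum (f := fun j => (ξ j) ^ 2) (fun j _ => sq_nonneg (ξ j)) (Finset.mem_univ i)
  have hk := key_ineq (P i) p (‖ξ‖ ^ 2) (ξ i) (hP i).1 (hP i).2 hp1 (hpa i)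
    (by positivity) ht
  rw [← d2_eq] at hk
  calc p * (p - 1) * (1 + ‖ξ‖ ^ 2) ^ ((p - 2) / 2) * lam i ^ 2
      ≤ d2 (P i) (ξ i) * lam i ^ 2 := mul_le_mul_of_nonneg_right hk (sq_nonneg _)
    _ = d2 (P i) (ξ i) * lam i * lam i := by ring
end

section
/- Let f(ξ) = (Σ_{k=1}^n (1 + ξ_k²)^{p_k})^{1/2} with 1 < p_i ≤ 2 for all i (so q = max_i p_i ≤ 2), and p = min_i p_i. Then for every ξ with |ξ| ≥ 1 and every λ ∈ ℝ^n, Σ_{i,j} f_{ξ_i ξ_j}(ξ) λ_i λ_j ≤ C |ξ|^{(p/q)(q-2)} |λ|² for a constant C depending only on n, p, q. -/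
open Real Finset

set_option maxHeartbeats 2000000 in
theorem sqrt_sum_hessian_upper_bound {n : ℕ}
    (P : Fin n → ℝ) (hP : ∀ i, 1 < P i ∧ P i ≤ 2)
    (p q : ℝ) (hp : IsLeast (Set.range P) p) (hq : IsGreatest (Set.range P) q)
    (f : EuclideanSpace ℝ (Fin n) → ℝ)
    (hf : f = fun ξ => Real.sqrt (∑ i, (1 + (ξ i) ^ 2) ^ (P i))) :
    ∃ C : ℝ, 0 < C ∧ ∀ ξ lam : EuclideanSpace ℝ (Fin n), 1 ≤ ‖ξ‖ →
      fderiv ℝ (fun x => fderiv ℝ f x lam) ξ lam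
        ≤ C * ‖ξ‖ ^ ((p / q) * (q - 2)) * ‖lam‖ ^ 2 := by
  subst hf
  obtain ⟨⟨ip, hip⟩, hpmin⟩ := hp
  obtain ⟨⟨iq, hiq⟩, hqmax⟩ := hq
  have hp1 : 1 < p := hip ▸ (hP ip).1
  have hp2 : p ≤ 2 := hip ▸ (hP ip).2
  have hq1 : 1 < q := hiq ▸ (hP iq).1
  have hq2 : q ≤ 2 := hiq ▸ (hP iq).2
  have hqP : ∀ i, P i ≤ q := fun i => hqmax ⟨i, rfl⟩
  have hpP : ∀ i, p ≤ P i := fun i => hpmin ⟨i, rfl⟩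
  set E := EuclideanSpace ℝ (Fin n)
  -- coordinate projections
  have hcoord : ∀ (x : E) (i : Fin n), HasFDerivAt (fun y : E => y i)
      (EuclideanSpace.proj i : E →L[ℝ] ℝ) x :=
    fun x i => (EuclideanSpace.proj i : E →L[ℝ] ℝ).hasFDerivAt
  have hpow : ∀ (x : E) (i : Fin n) (r : ℝ), HasFDerivAt (fun y : E => (1 + (y i)^2) ^ r)
      ((r * (1 + (x i)^2) ^ (r - 1) * (2 * x i)) • (EuclideanSpace.proj i : E →L[ℝ] ℝ)) x := by
    intro x i r
    have h1 := hcoord x i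
    have h2 : HasFDerivAt (fun y : E => 1 + (y i)^2)
        ((2 * x i) • (EuclideanSpace.proj i : E →L[ℝ] ℝ)) x := by
      have heq : (fun y : E => 1 + (y i)^2) = fun y => 1 + y i * y i := by funext y; ring
      rw [heq]
      have := (h1.mul h1).const_add 1
      refine this.congr_fderiv ?_
      ext y; simp; ring
    have h3 := h2.rpow_const (p := r) (Or.inl (by positivity))
    rw [smul_smul] at h3; exact h3
  set g : E → ℝ := fun x => ∑ i, (1 + (x i)^2) ^ (P i) with hg
  set c : E → Fin n → ℝ := fun x i => P i * (1 + (x i)^2) ^ (P i - 1) * (2 * x i) with hc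
  set G : E → (E →L[ℝ] ℝ) := fun x => ∑ i, c x i • (EuclideanSpace.proj i : E →L[ℝ] ℝ) with hG'
  have hgpos : ∀ x : E, 0 < g x := by
    intro x
    apply Finset.sum_pos (fun i _ => rpow_pos_of_pos (by positivity) _) ⟨ip, mem_univ ip⟩
  have hG : ∀ x : E, HasFDerivAt g (G x) x := fun x =>
    HasFDerivAt.fun_sum (fun i _ => hpow x i (P i))
  have hf' : ∀ x : E, HasFDerivAt (fun ξ : E => Real.sqrt (∑ i, (1 + (ξ i)^2) ^ (P i)))
      ((1 / (2 * Real.sqrt (g x))) • G x) x := fun x => (hG x).sqrt (ne_of_gt (hgpos x))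
  have hn : (0:ℝ) < n := by exact_mod_cast ip.pos
  refine ⟨6 * (n : ℝ) ^ (p * (1/q - 1/2)), by positivity, fun ξ lam hξ => ?_⟩
  -- first derivative as a function
  have hfun : (fun x : E => fderiv ℝ (fun ξ : E => Real.sqrt (∑ i, (1 + (ξ i)^2) ^ (P i))) x lam)
      = fun x : E => (2 * Real.sqrt (g x))⁻¹ * (∑ i, c x i * lam i) := by
    funext x
    rw [(hf' x).fderiv]
    simp only [ContinuousLinearMap.smul_apply, hG', ContinuousLinearMap.sum_apply,
      PiLp.proj_apply, smul_eq_mul, one_div]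
    rfl
  -- second derivative
  set S := g ξ with hS
  set s := Real.sqrt S with hs
  have hSpos : 0 < S := hgpos ξ
  have hspos : 0 < s := Real.sqrt_pos.2 hSpos
  set m : Fin n → ℝ := fun i => 2 * P i * (1 + (ξ i)^2) ^ (P i - 1)
    + 4 * P i * (P i - 1) * (ξ i)^2 * (1 + (ξ i)^2) ^ (P i - 2) with hm'
  have hB : HasFDerivAt (fun x : E => ∑ i, c x i * lam i)
      (∑ i, (m i * lam i) • (EuclideanSpace.proj i : E →L[ℝ] ℝ)) ξ := by
    apply HasFDerivAt.fun_sum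
    intro i _
    have heq : (fun x : E => c x i * lam i)
        = fun x => (2 * P i * lam i) * ((1 + (x i)^2) ^ (P i - 1) * x i) := by
      funext x; simp only [hc]; ring
    rw [heq]
    have h1 := hpow ξ i (P i - 1)
    have h2 := hcoord ξ i
    have h3 := ((h1.mul h2).const_mul (2 * P i * lam i))
    refine h3.congr_fderiv ?_
    ext y
    simp only [hm', ContinuousLinearMap.smul_apply, ContinuousLinearMap.add_apply,
      PiLp.proj_apply, smul_eq_mul]
    ring
  set r : ℝ := -(2 * (1 / (2 * s))) / (2 * s) ^ 2 with hr'
  have hA : HasFDerivAt (fun x : E => (2 * Real.sqrt (g x))⁻¹) (r • G ξ) ξ := by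
    have hsq := Real.hasDerivAt_sqrt (ne_of_gt hSpos)
    have h2 := (hsq.const_mul 2).fun_inv (by positivity)
    have h4 := h2.comp_hasFDerivAt ξ (hG ξ)
    exact h4
  have h2nd : HasFDerivAt
      (fun x : E => fderiv ℝ (fun ξ : E => Real.sqrt (∑ i, (1 + (ξ i)^2) ^ (P i))) x lam)
      ((2 * s)⁻¹ • (∑ i, (m i * lam i) • (EuclideanSpace.proj i : E →L[ℝ] ℝ))
        + (∑ i, c ξ i * lam i) • (r • G ξ)) ξ := by
    rw [hfun]
    exact hA.mul hB
  rw [h2nd.fderiv]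
  have hproj : ∀ (i : Fin n) (y : E), (EuclideanSpace.proj i : E →L[ℝ] ℝ) y = y i :=
    fun i y => rfl
  have hr0 : r ≤ 0 := by
    rw [hr']
    apply div_nonpos_of_nonpos_of_nonneg
    · have : 0 < 1/(2*s) := by positivity
      linarith
    · exact sq_nonneg _
  refine le_trans (b := (2*s)⁻¹ * ∑ i, m i * (lam i)^2) ?_ ?_
  · simp only [ContinuousLinearMap.add_apply, ContinuousLinearMap.smul_apply,
      ContinuousLinearMap.sum_apply, hproj, smul_eq_mul, hG']
    have hsum : ∑ i, m i * lam i * lam i = ∑ i, m i * (lam i)^2 :=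
      Finset.sum_congr rfl fun i _ => by ring
    rw [hsum]
    have hd := mul_nonpos_of_nonpos_of_nonneg hr0 (mul_self_nonneg (∑ i, c ξ i * lam i))
    linarith [hd]
  · -- main estimate
    have hξ0 : (0:ℝ) < ‖ξ‖ := lt_of_lt_of_le one_pos hξ
    have hq0 : (0:ℝ) < q := by linarith
    have hL : ∑ i, (lam i)^2 = ‖lam‖^2 := by
      rw [EuclideanSpace.norm_eq, Real.sq_sqrt (by positivity)]
      exact Finset.sum_congr rfl fun i _ => by rw [Real.norm_eq_abs, sq_abs]
    have hX : ∑ i, (ξ i)^2 = ‖ξ‖^2 := by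
      rw [EuclideanSpace.norm_eq, Real.sq_sqrt (by positivity)]
      exact Finset.sum_congr rfl fun i _ => by rw [Real.norm_eq_abs, sq_abs]
    have hbase : ∀ i : Fin n, (0:ℝ) < 1 + (ξ i)^2 := fun i => by positivity
    have hterm : ∀ i : Fin n, (1 + (ξ i)^2) ^ (P i) ≤ S := fun i =>
      Finset.single_le_sum (fun j _ => (Real.rpow_pos_of_pos (hbase j) _).le) (mem_univ i)
    have hS1 : (1:ℝ) ≤ S := by
      refine le_trans ?_ (hterm ip)
      exact Real.one_le_rpow (by nlinarith [sq_nonneg (ξ ip)]) (by linarith [hpP ip])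
    have hkey : ∀ i : Fin n, (1 + (ξ i)^2) ^ (P i - 1) ≤ S ^ (1 - 1/q) := by
      intro i
      have h0 := (hP i).1
      have h2 := (hP i).2
      have hPi0 : P i ≠ 0 := by linarith
      have e1 : (1 + (ξ i)^2) ^ (P i - 1) = ((1 + (ξ i)^2) ^ (P i)) ^ ((P i - 1)/P i) := by
        rw [← Real.rpow_mul (hbase i).le]
        congr 1
        field_simp
      rw [e1]
      refine le_trans (Real.rpow_le_rpow (Real.rpow_pos_of_pos (hbase i) _).le (hterm i)
        (div_nonneg (by linarith) (by linarith))) ?_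
      apply Real.rpow_le_rpow_of_exponent_le hS1
      have h3 : 1/q ≤ 1/(P i) := one_div_le_one_div_of_le (by linarith) (hqP i)
      have h4 : (P i - 1)/P i = 1 - 1/(P i) := by field_simp
      linarith
    have hmle : ∀ i : Fin n, m i ≤ 12 * S ^ (1 - 1/q) := by
      intro i
      have h0 := (hP i).1
      have h2 := (hP i).2
      have hb := hbase i
      have hpow1 : (0:ℝ) ≤ (1 + (ξ i)^2) ^ (P i - 1) := (Real.rpow_pos_of_pos hb _).le
      have hpow2 : (0:ℝ) ≤ (1 + (ξ i)^2) ^ (P i - 2) := (Real.rpow_pos_of_pos hb _).le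
      have hsplit : (1 + (ξ i)^2) ^ (P i - 2) * (1 + (ξ i)^2) = (1 + (ξ i)^2) ^ (P i - 1) := by
        rw [← Real.rpow_add_one (ne_of_gt hb)]
        ring_nf
      have h8 : 4 * P i * (P i - 1) ≤ 8 := by
        nlinarith [mul_nonneg (by linarith : (0:ℝ) ≤ 2 - P i) (by linarith : (0:ℝ) ≤ P i + 1)]
      have c1 : 4 * P i * (P i - 1) * (ξ i)^2 ≤ 8 * (1 + (ξ i)^2) := by
        nlinarith [mul_le_mul_of_nonneg_right h8 (sq_nonneg (ξ i))]
      have c2 : 4 * P i * (P i - 1) * (ξ i)^2 * (1 + (ξ i)^2)^(P i - 2)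
          ≤ 8 * ((1 + (ξ i)^2)^(P i - 2) * (1 + (ξ i)^2)) := by
        nlinarith [mul_le_mul_of_nonneg_right c1 hpow2]
      have h1 : m i ≤ 12 * (1 + (ξ i)^2) ^ (P i - 1) := by
        simp only [hm']
        rw [hsplit] at c2
        nlinarith [c2, hpow1, mul_le_mul_of_nonneg_right (by linarith : 2 * P i ≤ 4) hpow1]
      exact h1.trans (by linarith [hkey i])
    have hmain : ∑ i, m i * (lam i)^2 ≤ 12 * S^(1-1/q) * ∑ i, (lam i)^2 := by
      rw [Finset.mul_sum]
      exact Finset.sum_le_sum fun i _ => mul_le_mul_of_nonneg_right (hmle i) (sq_nonneg _)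
    obtain ⟨i1, -, hi1⟩ := Finset.exists_max_image (univ : Finset (Fin n))
      (fun i => (ξ i)^2) ⟨ip, mem_univ ip⟩
    have hsum_le : ‖ξ‖^2 ≤ n * (ξ i1)^2 := by
      rw [← hX]
      calc ∑ i, (ξ i)^2 ≤ ∑ _i : Fin n, (ξ i1)^2 :=
            Finset.sum_le_sum fun i _ => hi1 i (mem_univ i)
        _ = n * (ξ i1)^2 := by
            rw [Finset.sum_const, Finset.card_univ, Fintype.card_fin, nsmul_eq_mul]
    have hdiv : ‖ξ‖^2/n ≤ (ξ i1)^2 := by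
      rw [div_le_iff₀ hn]
      linarith [hsum_le]
    have hSlow : (‖ξ‖^2 / n) ^ p ≤ S := by
      calc (‖ξ‖^2/n)^p ≤ (1 + (ξ i1)^2)^p :=
            Real.rpow_le_rpow (by positivity) (by linarith) (by linarith)
        _ ≤ (1 + (ξ i1)^2)^(P i1) :=
            Real.rpow_le_rpow_of_exponent_le (by nlinarith [sq_nonneg (ξ i1)]) (hpP i1)
        _ ≤ S := hterm i1
    have he : (1:ℝ)/2 - 1/q ≤ 0 := by
      have h3 : 1/(2:ℝ) ≤ 1/q := one_div_le_one_div_of_le hq0 hq2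
      linarith
    have hbpos : (0:ℝ) < ‖ξ‖^2/n := by positivity
    have hSe : S ^ ((1:ℝ)/2 - 1/q) ≤ (n:ℝ)^(p*(1/q-1/2)) * ‖ξ‖ ^ ((p/q)*(q-2)) := by
      have h1 : S ^ ((1:ℝ)/2 - 1/q) ≤ ((‖ξ‖^2/n)^p) ^ ((1:ℝ)/2 - 1/q) :=
        Real.rpow_le_rpow_of_nonpos (Real.rpow_pos_of_pos hbpos p) hSlow he
      refine h1.trans_eq ?_
      rw [← Real.rpow_mul hbpos.le, Real.div_rpow (by positivity) hn.le,
        ← Real.rpow_natCast ‖ξ‖ 2, ← Real.rpow_mul (norm_nonneg ξ),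
        div_eq_mul_inv, ← Real.rpow_neg hn.le, mul_comm]
      congr 1
      · congr 1
        ring
      · congr 1
        push_cast
        field_simp
    calc (2*s)⁻¹ * ∑ i, m i * (lam i)^2
        ≤ (2*s)⁻¹ * (12 * S^(1-1/q) * ∑ i, (lam i)^2) := by
          exact mul_le_mul_of_nonneg_left hmain (inv_nonneg.2 (by linarith))
      _ = 6 * S^((1:ℝ)/2 - 1/q) * ∑ i, (lam i)^2 := by
          rw [hs, Real.sqrt_eq_rpow,
            show (1:ℝ) - 1/q = ((1:ℝ)/2 - 1/q) + 1/2 by ring, Real.rpow_add hSpos]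
          have hne : S ^ ((1:ℝ)/2) ≠ 0 := ne_of_gt (Real.rpow_pos_of_pos hSpos _)
          field_simp
          ring
      _ ≤ 6 * ((n:ℝ)^(p*(1/q-1/2)) * ‖ξ‖^((p/q)*(q-2))) * ∑ i, (lam i)^2 := by
          exact mul_le_mul_of_nonneg_right (mul_le_mul_of_nonneg_left hSe (by norm_num))
            (Finset.sum_nonneg fun i _ => sq_nonneg _)
      _ = 6*(n:ℝ)^(p*(1/q-1/2)) * ‖ξ‖^((p/q)*(q-2)) * ‖lam‖^2 := by
          rw [hL]
          ring
end

section
/- Let g₁, g₂ : [1,+∞) → (0,+∞) be continuous with g₂ decreasing, t ↦ t·g₂(t) increasing, and (g₂(t))^{2/2*} ≤ C₁ t^{2β} g₁(t) for all t ≥ 1, where 2* = 2n/(n-2) (n > 2) and 1/n < β < 2/n. Then for every γ ≥ 0 there is a constant C₃ = C₃(C₁, g₂(1)) > 0, independent of γ, such that for all t ≥ 0: C₃[1 + g₂(1+t)^{1/2*} (1+t)^{γ/2+1-β}/(γ/2+1-β)²] ≤ 1 + ∫₀^t (1+s)^{(γ-2)/2} s √(g₁(1+s)) ds. -/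
open Real intervalIntegral

lemma elem_cont (α : ℝ) : ContinuousOn (fun s : ℝ => (1+s) ^ (α-2) * s) (Set.Ici 0) := by
  apply ContinuousOn.mul _ continuousOn_id
  apply ContinuousOn.rpow_const (by fun_prop)
  intro x hx
  left
  simp only [Set.mem_Ici] at hx
  positivity

lemma elem_intble (α a b : ℝ) (ha : 0 ≤ a) (hb : 0 ≤ b) :
    IntervalIntegrable (fun s : ℝ => (1+s) ^ (α-2) * s) MeasureTheory.volume a b := by
  apply ContinuousOn.intervalIntegrable
  apply (elem_cont α).mono
  intro x hx
  rcases le_total a b with h | h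
  · rw [Set.uIcc_of_le h] at hx; exact le_trans ha hx.1
  · rw [Set.uIcc_of_ge h] at hx; exact le_trans hb hx.1

set_option maxHeartbeats 1000000

lemma elem (α t : ℝ) (hα : 1/3 ≤ α) (ht : 0 ≤ t) :
    (1+t) ^ α ≤ 800 * α^2 * (1 + ∫ s in (0:ℝ)..t, (1+s) ^ (α-2) * s) := by
  have hα0 : 0 < α := lt_of_lt_of_le (by norm_num) hα
  obtain ⟨I, hIdef⟩ : ∃ I, I = ∫ s in (0:ℝ)..t, (1+s) ^ (α-2) * s := ⟨_, rfl⟩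
  rw [← hIdef]
  have hI0 : 0 ≤ I := by
    rw [hIdef]
    apply intervalIntegral.integral_nonneg ht
    intro s hs
    have : (0:ℝ) ≤ 1 + s := by linarith [hs.1]
    exact mul_nonneg (Real.rpow_nonneg this _) hs.1
  have h9 : 1/9 ≤ α^2 := by nlinarith
  by_cases hcase : (1+t) ^ α ≤ 2
  · nlinarith [mul_nonneg (mul_nonneg (by norm_num : (0:ℝ) ≤ 800) (sq_nonneg α)) hI0]
  push_neg at hcase
  obtain ⟨T, hTdef⟩ : ∃ T, T = 1 + t := ⟨_, rfl⟩
  rw [← hTdef] at hcase ⊢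
  have hTpos : (0:ℝ) < T := by rw [hTdef]; linarith
  have hT1 : (1:ℝ) ≤ T := by rw [hTdef]; linarith
  obtain ⟨x, hxdef⟩ : ∃ x, x = Real.log 2 / (2*α) := ⟨_, rfl⟩
  have hlog2 : (0.6931471803:ℝ) < Real.log 2 := Real.log_two_gt_d9
  have hlog2' : Real.log 2 < 0.6931471808 := Real.log_two_lt_d9
  have hx0 : 0 < x := by
    rw [hxdef]; exact div_pos (by linarith) (by linarith)
  have hx_le : x ≤ 3/2 := by
    rw [hxdef, div_le_iff₀ (by linarith)]
    nlinarith
  obtain ⟨θ, hθdef⟩ : ∃ θ, θ = Real.exp (-x) := ⟨_, rfl⟩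
  have hθpos : 0 < θ := hθdef ▸ Real.exp_pos _
  have hθ1 : θ < 1 := by
    rw [hθdef, Real.exp_lt_one_iff]; linarith
  -- 1 - θ ≥ x/(1+x) ≥ 1/(10α)
  have h1x : 1 + x ≤ Real.exp x := by linarith [Real.add_one_le_exp x]
  have hθle : θ ≤ 1/(1+x) := by
    rw [hθdef, Real.exp_neg]
    rw [one_div]
    exact inv_anti₀ (by linarith) h1x
  have h1θ : 1/(10*α) ≤ 1 - θ := by
    have h1 : x/(1+x) ≤ 1 - θ := by
      have : 1 - 1/(1+x) = x/(1+x) := by field_simp; ring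
      linarith [hθle, this]
    have h2 : 1/(10*α) ≤ x/(1+x) := by
      rw [div_le_div_iff₀ (by linarith) (by linarith)]
      have hx4 : 1/(4*α) ≤ x := by
        rw [hxdef, div_le_div_iff₀ (by linarith) (by linarith)]
        nlinarith
      have h10 : (5:ℝ)/2 ≤ 10*α*x := by
        have := mul_le_mul_of_nonneg_left hx4 (by linarith : (0:ℝ) ≤ 10*α)
        have heq : 10*α*(1/(4*α)) = 5/2 := by field_simp; ring
        linarith
      nlinarith
    linarith
  have hθ4 : 1/4 ≤ θ := by
    have hx4 : x < Real.log 4 := by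
      have : Real.log 4 = 2 * Real.log 2 := by
        rw [show (4:ℝ) = 2^2 by norm_num, Real.log_pow]; push_cast; ring
      rw [this, hxdef, div_lt_iff₀ (by linarith)]
      nlinarith
    have : Real.exp x < 4 := by
      calc Real.exp x < Real.exp (Real.log 4) := Real.exp_lt_exp.mpr hx4
        _ = 4 := Real.exp_log (by norm_num)
    rw [hθdef, Real.exp_neg]
    rw [le_inv_comm₀] <;> [skip; norm_num; exact Real.exp_pos x]
    linarith
  -- θ²T ≥ 1
  have hθθT : 1 ≤ θ * θ * T := by
    have hlogT : Real.log 2 < α * Real.log T := by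
      have := Real.log_lt_log (by norm_num) hcase
      rwa [Real.log_rpow hTpos] at this
    have h2x : 2 * x < Real.log T := by
      rw [hxdef]
      rw [show 2 * (Real.log 2 / (2*α)) = Real.log 2 / α by ring, div_lt_iff₀ (by linarith)]
      linarith [hlogT, mul_comm α (Real.log T)]
    have : Real.exp (2*x) < T := by
      calc Real.exp (2*x) < Real.exp (Real.log T) := Real.exp_lt_exp.mpr h2x
        _ = T := Real.exp_log hTpos
    calc (1:ℝ) = Real.exp (-x) * Real.exp (-x) * Real.exp (2*x) := by
          rw [← Real.exp_add, ← Real.exp_add, show -x + -x + 2*x = 0 by ring, Real.exp_zero]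
      _ ≤ θ * θ * T := by
          rw [hθdef]
          apply mul_le_mul_of_nonneg_left this.le (by positivity)
  obtain ⟨s₀, hs₀def⟩ : ∃ s₀, s₀ = θ * T - 1 := ⟨_, rfl⟩
  have hθT1 : 1 ≤ θ * T := by nlinarith [hθθT, hθ1, hθpos, hTpos, mul_pos hθpos hTpos]
  have hs₀0 : 0 ≤ s₀ := by rw [hs₀def]; linarith
  have hs₀t : s₀ ≤ t := by
    have h1 : θ * T ≤ T := by nlinarith [hθ1, hTpos]
    rw [hs₀def, hTdef]
    rw [hTdef] at h1
    linarith
  -- split integral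
  have hsplit : I = (∫ s in (0:ℝ)..s₀, (1+s) ^ (α-2) * s) + ∫ s in s₀..t, (1+s) ^ (α-2) * s := by
    rw [hIdef]
    rw [← intervalIntegral.integral_add_adjacent_intervals
      (elem_intble α 0 s₀ (le_refl 0) hs₀0) (elem_intble α s₀ t hs₀0 ht)]
  have hpart1 : 0 ≤ ∫ s in (0:ℝ)..s₀, (1+s) ^ (α-2) * s := by
    apply intervalIntegral.integral_nonneg hs₀0
    intro s hs
    have : (0:ℝ) ≤ 1 + s := by linarith [hs.1]
    exact mul_nonneg (Real.rpow_nonneg this _) hs.1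
  -- lower bound on [s₀, t]
  obtain ⟨c₀, hc₀def⟩ : ∃ c₀, c₀ = (θ*T) ^ α * T ^ (-2:ℝ) * s₀ := ⟨_, rfl⟩
  have hθTpos : 0 < θ * T := by linarith
  have hpt : ∀ s ∈ Set.Icc s₀ t, c₀ ≤ (1+s) ^ (α-2) * s := by
    intro s hs
    have hs1 : θ * T ≤ 1 + s := by
      have := hs.1; rw [hs₀def] at this; linarith
    have hs2 : 1 + s ≤ T := by rw [hTdef]; linarith [hs.2]
    have h1spos : (0:ℝ) < 1 + s := by linarith
    have hb1 : (θ*T) ^ α ≤ (1+s) ^ α := Real.rpow_le_rpow hθTpos.le hs1 hα0.le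
    have hb2 : T ^ (-2:ℝ) ≤ (1+s) ^ (-2:ℝ) :=
      Real.rpow_le_rpow_of_nonpos h1spos hs2 (by norm_num)
    have hexpand : (1+s) ^ (α-2) = (1+s) ^ α * (1+s) ^ (-2:ℝ) := by
      rw [← Real.rpow_add h1spos]; ring_nf
    rw [hexpand, hc₀def]
    have hss : s₀ ≤ s := hs.1
    have h1 : (θ*T) ^ α * T ^ (-2:ℝ) ≤ (1+s) ^ α * (1+s) ^ (-2:ℝ) := by
      apply mul_le_mul hb1 hb2 (by positivity) (by positivity)
    apply mul_le_mul h1 hss hs₀0 (by positivity)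
  have hpart2 : c₀ * (t - s₀) ≤ ∫ s in s₀..t, (1+s) ^ (α-2) * s := by
    have := intervalIntegral.integral_mono_on hs₀t
      (intervalIntegrable_const) (elem_intble α s₀ t hs₀0 ht) hpt
    rwa [intervalIntegral.integral_const, smul_eq_mul, mul_comm] at this
  have hkey : c₀ * (t - s₀) ≤ I := by
    rw [hsplit]; linarith
  -- now compute c₀ * (t - s₀) ≥ T^α / (800 α²)
  have hθα : (1:ℝ)/2 ≤ θ ^ α := by
    have : θ ^ α = Real.exp (-x * α) := by
      rw [hθdef, ← Real.exp_mul]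
    rw [this]
    have hxα : -x * α = -(Real.log 2 / 2) := by
      rw [hxdef]; field_simp
    rw [hxα]
    have : Real.exp (-(Real.log 2 / 2)) = (Real.exp (Real.log 2 / 2))⁻¹ := by
      rw [← Real.exp_neg]
    rw [this, le_inv_comm₀ (by norm_num) (Real.exp_pos _)]
    have : Real.exp (Real.log 2 / 2) ≤ Real.exp (Real.log 2) := by
      apply Real.exp_le_exp.mpr; linarith
    rw [Real.exp_log (by norm_num)] at this
    linarith
  have hts₀ : t - s₀ = (1 - θ) * T := by
    rw [hs₀def, hTdef]; ring
  have hs₀ge : θ * T * (1 - θ) ≤ s₀ := by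
    rw [hs₀def]; nlinarith [hθθT]
  have hTα2 : T ^ (-2:ℝ) = (T^2)⁻¹ := by
    rw [show (-2:ℝ) = -((2:ℕ):ℝ) by norm_num, Real.rpow_neg hTpos.le, Real.rpow_natCast]
  have hmT : (θ*T) ^ α = θ ^ α * T ^ α := Real.mul_rpow hθpos.le hTpos.le
  have hTαpos : 0 < T ^ α := Real.rpow_pos_of_pos hTpos α
  -- c₀ * (t-s₀) = θ^α * T^α * T^{-2} * s₀ * (1-θ) * T ≥ θ^α T^α T^{-2} θT(1-θ)(1-θ)T
  have hlow : θ ^ α * θ * (1-θ)^2 * T ^ α ≤ c₀ * (t - s₀) := by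
    rw [hc₀def, hts₀, hmT, hTα2]
    have hT2 : (T^2)⁻¹ * T * T = 1 := by field_simp
    have expand : θ ^ α * T ^ α * (T^2)⁻¹ * (θ * T * (1-θ)) * ((1-θ) * T)
        = θ ^ α * θ * (1-θ)^2 * T ^ α * ((T^2)⁻¹ * T * T) := by ring
    have step : θ ^ α * T ^ α * (T^2)⁻¹ * (θ * T * (1-θ)) * ((1-θ) * T)
        ≤ θ ^ α * T ^ α * (T^2)⁻¹ * s₀ * ((1-θ) * T) := by
      apply mul_le_mul_of_nonneg_right _ (mul_nonneg (by linarith) hTpos.le)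
      apply mul_le_mul_of_nonneg_left hs₀ge (by positivity)
    calc θ ^ α * θ * (1-θ)^2 * T ^ α = θ ^ α * T ^ α * (T^2)⁻¹ * (θ * T * (1-θ)) * ((1-θ) * T) := by
          rw [expand, hT2, mul_one]
      _ ≤ _ := step
  have h1θ2 : (1/(10*α))^2 ≤ (1-θ)^2 := by
    apply pow_le_pow_left₀ (by positivity) h1θ
  have hfinal : T ^ α / (800 * α^2) ≤ c₀ * (t - s₀) := by
    apply le_trans _ hlow
    have : 1/(800*α^2) ≤ θ ^ α * θ * (1-θ)^2 := by
      calc 1/(800*α^2) = (1/2) * (1/4) * (1/(10*α))^2 := by field_simp; ring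
        _ ≤ θ ^ α * θ * (1-θ)^2 := by
            apply mul_le_mul (mul_le_mul hθα hθ4 (by norm_num) (by linarith)) h1θ2
              (by positivity) (by positivity)
    calc T ^ α / (800*α^2) = 1/(800*α^2) * T ^ α := by ring
      _ ≤ θ ^ α * θ * (1-θ)^2 * T ^ α := mul_le_mul_of_nonneg_right this hTαpos.le
  have : T ^ α / (800 * α^2) ≤ I := le_trans hfinal hkey
  rw [div_le_iff₀ (by positivity)] at this
  nlinarith [this]

theorem integral_lower_bound_lemma (n : ℕ) (hn : 2 < n)
    (g₁ g₂ : ℝ → ℝ) (C₁ β : ℝ) (hC₁ : 0 < C₁)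
    (hg₁c : ContinuousOn g₁ (Set.Ici 1)) (hg₂c : ContinuousOn g₂ (Set.Ici 1))
    (hg₁pos : ∀ t : ℝ, 1 ≤ t → 0 < g₁ t) (hg₂pos : ∀ t : ℝ, 1 ≤ t → 0 < g₂ t)
    (hg₂dec : AntitoneOn g₂ (Set.Ici 1))
    (hg₂mono : MonotoneOn (fun t => t * g₂ t) (Set.Ici 1))
    (hβ₁ : 1 / (n : ℝ) < β) (hβ₂ : β < 2 / (n : ℝ))
    (hcomp : ∀ t : ℝ, 1 ≤ t →
      (g₂ t) ^ (2 / (2 * (n : ℝ) / ((n : ℝ) - 2))) ≤ C₁ * t ^ (2 * β) * g₁ t) :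
    ∃ C₃ : ℝ, 0 < C₃ ∧ ∀ γ : ℝ, 0 ≤ γ → ∀ t : ℝ, 0 ≤ t →
      C₃ * (1 + (g₂ (1 + t)) ^ (1 / (2 * (n : ℝ) / ((n : ℝ) - 2))) *
          (1 + t) ^ (γ / 2 + 1 - β) / (γ / 2 + 1 - β) ^ 2)
        ≤ 1 + ∫ s in (0:ℝ)..t, (1 + s) ^ ((γ - 2) / 2) * s * Real.sqrt (g₁ (1 + s)) := by
  have hn3 : (3:ℝ) ≤ (n:ℝ) := by exact_mod_cast hn
  have hn2 : (0:ℝ) < (n:ℝ) - 2 := by linarith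
  have hnpos : (0:ℝ) < (n:ℝ) := by linarith
  set q := 1 / (2 * (n : ℝ) / ((n : ℝ) - 2)) with hqdef
  have hP : 0 < 2 * (n:ℝ) / ((n:ℝ) - 2) := by positivity
  have hq0 : 0 < q := by rw [hqdef]; positivity
  have hβ3 : β < 2/3 := by
    have : 2/(n:ℝ) ≤ 2/3 := by
      rw [div_le_div_iff₀ hnpos (by norm_num)]; linarith
    linarith
  have hM'pos : 0 < g₂ 1 ^ q := Real.rpow_pos_of_pos (hg₂pos 1 le_rfl) q
  set M' := g₂ 1 ^ q with hM'def
  have hsC : 0 < Real.sqrt C₁ := Real.sqrt_pos.mpr hC₁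
  set D := 1 + 800 * M' + 800 * Real.sqrt C₁ with hDdef
  have hD : 0 < D := by rw [hDdef]; positivity
  refine ⟨1/D, by positivity, ?_⟩
  intro γ hγ t ht
  set α := γ / 2 + 1 - β with hαdef
  have hα3 : 1/3 ≤ α := by rw [hαdef]; linarith
  have hα0 : 0 < α := lt_of_lt_of_le (by norm_num) hα3
  set K := g₂ (1+t) ^ q with hKdef
  have h1t : (1:ℝ) ≤ 1 + t := by linarith
  have hK0 : 0 < K := Real.rpow_pos_of_pos (hg₂pos _ h1t) q
  have hKM : K ≤ M' := by
    rw [hKdef, hM'def]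
    exact Real.rpow_le_rpow (hg₂pos _ h1t).le
      (hg₂dec (Set.mem_Ici.mpr le_rfl) (Set.mem_Ici.mpr h1t) h1t) hq0.le
  -- pointwise bound
  have hpt : ∀ s ∈ Set.Icc (0:ℝ) t,
      K / Real.sqrt C₁ * ((1+s) ^ (α-2) * s)
        ≤ (1+s) ^ ((γ-2)/2) * s * Real.sqrt (g₁ (1+s)) := by
    intro s hs
    have hu : (1:ℝ) ≤ 1 + s := by linarith [hs.1]
    have hupos : (0:ℝ) < 1 + s := by linarith
    have hg₂u : 0 < g₂ (1+s) := hg₂pos _ hu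
    have h2 : g₂ (1+s) ^ q ≤ Real.sqrt C₁ * (1+s) ^ β * Real.sqrt (g₁ (1+s)) := by
      have h1 := hcomp (1+s) hu
      have hsq := Real.sqrt_le_sqrt h1
      have hl : Real.sqrt (g₂ (1+s) ^ (2 / (2 * (n : ℝ) / ((n : ℝ) - 2)))) = g₂ (1+s) ^ q := by
        rw [Real.sqrt_eq_rpow, ← Real.rpow_mul hg₂u.le]
        congr 1
        rw [hqdef]; ring
      have hr : Real.sqrt (C₁ * (1+s) ^ (2*β) * g₁ (1+s))
          = Real.sqrt C₁ * (1+s) ^ β * Real.sqrt (g₁ (1+s)) := by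
        rw [Real.sqrt_mul (by positivity), Real.sqrt_mul hC₁.le]
        congr 2
        rw [Real.sqrt_eq_rpow, ← Real.rpow_mul hupos.le]
        congr 1; ring
      rw [hl, hr] at hsq
      exact hsq
    have h3 : K ≤ g₂ (1+s) ^ q := by
      rw [hKdef]
      exact Real.rpow_le_rpow (hg₂pos _ h1t).le
        (hg₂dec (Set.mem_Ici.mpr hu) (Set.mem_Ici.mpr h1t) (by linarith [hs.2])) hq0.le
    have hKS : K ≤ Real.sqrt C₁ * (1+s) ^ β * Real.sqrt (g₁ (1+s)) := h3.trans h2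
    have hB : 0 < (1+s) ^ β := Real.rpow_pos_of_pos hupos β
    have hS : K / Real.sqrt C₁ * ((1+s) ^ β)⁻¹ ≤ Real.sqrt (g₁ (1+s)) := by
      have heq : K / Real.sqrt C₁ * ((1+s) ^ β)⁻¹ = K / (Real.sqrt C₁ * (1+s) ^ β) := by
        field_simp
      rw [heq, div_le_iff₀ (by positivity)]
      calc K ≤ Real.sqrt C₁ * (1+s) ^ β * Real.sqrt (g₁ (1+s)) := hKS
        _ = Real.sqrt (g₁ (1+s)) * (Real.sqrt C₁ * (1+s) ^ β) := by ring
    have hrw : (1+s) ^ (α-2) = (1+s) ^ ((γ-2)/2) * ((1+s) ^ β)⁻¹ := by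
      rw [← Real.rpow_neg hupos.le, ← Real.rpow_add hupos]
      congr 1
      rw [hαdef]; ring
    have hApos : 0 < (1+s) ^ ((γ-2)/2) := Real.rpow_pos_of_pos hupos _
    calc K / Real.sqrt C₁ * ((1+s) ^ (α-2) * s)
        = (K / Real.sqrt C₁ * ((1+s) ^ β)⁻¹) * ((1+s) ^ ((γ-2)/2) * s) := by
          rw [hrw]; ring
      _ ≤ Real.sqrt (g₁ (1+s)) * ((1+s) ^ ((γ-2)/2) * s) :=
          mul_le_mul_of_nonneg_right hS (mul_nonneg hApos.le hs.1)
      _ = (1+s) ^ ((γ-2)/2) * s * Real.sqrt (g₁ (1+s)) := by ring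
  -- integrability
  have hf_cont : ContinuousOn (fun s : ℝ => (1+s) ^ ((γ-2)/2) * s * Real.sqrt (g₁ (1+s)))
      (Set.Icc 0 t) := by
    apply ContinuousOn.mul
    · apply ContinuousOn.mul _ continuousOn_id
      apply ContinuousOn.rpow_const (by fun_prop)
      intro x hx
      left
      have := hx.1
      positivity
    · apply Real.continuous_sqrt.comp_continuousOn
      apply hg₁c.comp ((by fun_prop : Continuous fun s : ℝ => 1 + s).continuousOn)
      intro x hx
      simp only [Set.mem_Ici]
      linarith [hx.1]
  have hf_int : IntervalIntegrable (fun s : ℝ => (1+s) ^ ((γ-2)/2) * s * Real.sqrt (g₁ (1+s)))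
      MeasureTheory.volume 0 t := by
    apply ContinuousOn.intervalIntegrable
    rwa [Set.uIcc_of_le ht]
  have hg_int : IntervalIntegrable (fun s : ℝ => K / Real.sqrt C₁ * ((1+s) ^ (α-2) * s))
      MeasureTheory.volume 0 t := (elem_intble α 0 t le_rfl ht).const_mul _
  have hmono := intervalIntegral.integral_mono_on ht hg_int hf_int hpt
  rw [intervalIntegral.integral_const_mul] at hmono
  obtain ⟨I, hIdef⟩ : ∃ I, I = ∫ s in (0:ℝ)..t, (1+s) ^ (α-2) * s := ⟨_, rfl⟩
  obtain ⟨F, hFdef⟩ : ∃ F, F = ∫ s in (0:ℝ)..t, (1+s) ^ ((γ-2)/2) * s * Real.sqrt (g₁ (1+s)) :=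
    ⟨_, rfl⟩
  rw [← hIdef, ← hFdef] at hmono
  rw [← hFdef]
  have hI0 : 0 ≤ I := by
    rw [hIdef]
    apply intervalIntegral.integral_nonneg ht
    intro s hs
    have h0s : (0:ℝ) ≤ 1 + s := by linarith [hs.1]
    exact mul_nonneg (Real.rpow_nonneg h0s _) hs.1
  have hF0 : 0 ≤ F := by
    rw [hFdef]
    apply intervalIntegral.integral_nonneg ht
    intro s hs
    have h0s : (0:ℝ) ≤ 1 + s := by linarith [hs.1]
    exact mul_nonneg (mul_nonneg (Real.rpow_nonneg h0s _) hs.1) (Real.sqrt_nonneg _)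
  have helem : (1+t) ^ α ≤ 800 * α^2 * (1 + I) := hIdef ▸ elem α t hα3 ht
  have hKI : K * I ≤ Real.sqrt C₁ * F := by
    have h1 : K * I = Real.sqrt C₁ * (K / Real.sqrt C₁ * I) := by
      field_simp
    rw [h1]
    exact mul_le_mul_of_nonneg_left hmono hsC.le
  have hX : K * (1+t) ^ α / α^2 ≤ 800 * K * (1 + I) := by
    rw [div_le_iff₀ (by positivity)]
    calc K * (1+t) ^ α ≤ K * (800 * α^2 * (1+I)) := mul_le_mul_of_nonneg_left helem hK0.le
      _ = 800 * K * (1+I) * α^2 := by ring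
  have hXF : K * (1+t) ^ α / α^2 ≤ 800 * M' + 800 * (Real.sqrt C₁ * F) := by
    have hexp : 800 * K * (1 + I) = 800 * K + 800 * (K * I) := by ring
    rw [hexp] at hX
    linarith
  rw [div_mul_eq_mul_div, div_le_iff₀ hD, one_mul]
  have hDF : 0 ≤ (800 * M' + 800 * Real.sqrt C₁) * F := by positivity
  calc 1 + K * (1+t) ^ α / α^2 ≤ 1 + 800 * M' + 800 * (Real.sqrt C₁ * F) := by linarith
    _ ≤ (1 + F) * D := by rw [hDdef]; nlinarith [hF0, hM'pos, hsC]
end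

section
/- Let Φ(t) = (1+t)^{γ-2} t² for γ ≥ 0 and define G(t) = 1 + ∫₀^t √(Φ(s) g₁(1+s)) ds where g₁ ≤ g₂ pointwise (after multiplying by (1+s)) and t ↦ t g₂(t) is increasing on [1,∞). Then for all t ≥ 0, G(t) ≤ 1 + 2√(Φ(t)(1+t) g₂(1+t)) √(1+t), and hence (G(t))² ≤ 8[1 + Φ(t)(1+t)² g₂(1+t)]. -/
lemma aux_mono (γ : ℝ) (hγ : 0 ≤ γ) {s t : ℝ} (hs : 0 ≤ s) (hst : s ≤ t) :
    (1 + s) ^ (γ - 2) * s ^ 2 ≤ (1 + t) ^ (γ - 2) * t ^ 2 := by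
  have h1s : (0:ℝ) < 1 + s := by linarith
  have h1t : (0:ℝ) < 1 + t := by linarith
  have e : ∀ u : ℝ, 0 < (1:ℝ) + u →
      (1 + u) ^ (γ - 2) * u ^ 2 = (1 + u) ^ γ * (u / (1 + u)) ^ 2 := by
    intro u hu
    rw [Real.rpow_sub hu, show ((2:ℝ) = ((2:ℕ):ℝ)) by norm_num, Real.rpow_natCast,
      div_pow]
    field_simp
  rw [e s h1s, e t h1t]
  have h1 : (1 + s) ^ γ ≤ (1 + t) ^ γ :=
    Real.rpow_le_rpow h1s.le (by linarith) hγ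
  have h2 : (s / (1 + s)) ^ 2 ≤ (t / (1 + t)) ^ 2 := by
    have hd : s / (1 + s) ≤ t / (1 + t) := by
      rw [div_le_div_iff₀ h1s h1t]; nlinarith
    exact pow_le_pow_left₀ (div_nonneg hs h1s.le) hd 2
  exact mul_le_mul h1 h2 (by positivity) (by positivity)

theorem G_upper_bound (γ : ℝ) (hγ : 0 ≤ γ) (g₁ g₂ : ℝ → ℝ)
    (hg₁pos : ∀ t : ℝ, 1 ≤ t → 0 < g₁ t) (hg₂pos : ∀ t : ℝ, 1 ≤ t → 0 < g₂ t)
    (hg₁c : ContinuousOn g₁ (Set.Ici 1))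
    (hle : ∀ s : ℝ, 0 ≤ s → (1 + s) * g₁ (1 + s) ≤ (1 + s) * g₂ (1 + s))
    (hmono : MonotoneOn (fun t => t * g₂ t) (Set.Ici 1)) :
    ∀ t : ℝ, 0 ≤ t →
      (1 + ∫ s in (0:ℝ)..t, Real.sqrt ((1 + s) ^ (γ - 2) * s ^ 2 * g₁ (1 + s)))
          ≤ 1 + 2 * Real.sqrt ((1 + t) ^ (γ - 2) * t ^ 2 * (1 + t) * g₂ (1 + t)) *
              Real.sqrt (1 + t) ∧
      (1 + ∫ s in (0:ℝ)..t, Real.sqrt ((1 + s) ^ (γ - 2) * s ^ 2 * g₁ (1 + s))) ^ 2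
          ≤ 8 * (1 + (1 + t) ^ (γ - 2) * t ^ 2 * (1 + t) ^ 2 * g₂ (1 + t)) := by
  intro t ht
  have h1t : (0:ℝ) < 1 + t := by linarith
  set Φt : ℝ := (1 + t) ^ (γ - 2) * t ^ 2 * (1 + t) * g₂ (1 + t) with hΦt
  have hΦtnn : 0 ≤ Φt := by
    have := (hg₂pos (1 + t) (by linarith)).le
    positivity
  -- pointwise bound on [0, t]
  have hpt : ∀ s ∈ Set.Icc (0:ℝ) t,
      Real.sqrt ((1 + s) ^ (γ - 2) * s ^ 2 * g₁ (1 + s))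
        ≤ Real.sqrt Φt * (1 + s) ^ (-(2:ℝ)⁻¹) := by
    intro s hs
    obtain ⟨hs0, hst⟩ := hs
    have h1s : (0:ℝ) < 1 + s := by linarith
    have key : (1 + s) ^ (γ - 2) * s ^ 2 * g₁ (1 + s) ≤ Φt / (1 + s) := by
      rw [le_div_iff₀ h1s]
      have step1 : (1 + s) ^ (γ - 2) * s ^ 2 * g₁ (1 + s) * (1 + s)
          = (1 + s) ^ (γ - 2) * s ^ 2 * ((1 + s) * g₁ (1 + s)) := by ring
      rw [step1]
      calc (1 + s) ^ (γ - 2) * s ^ 2 * ((1 + s) * g₁ (1 + s))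
          ≤ (1 + s) ^ (γ - 2) * s ^ 2 * ((1 + s) * g₂ (1 + s)) := by
            have h := hle s hs0
            have hA : (0:ℝ) ≤ (1 + s) ^ (γ - 2) * s ^ 2 := by positivity
            nlinarith
        _ ≤ (1 + t) ^ (γ - 2) * t ^ 2 * ((1 + t) * g₂ (1 + t)) := by
            have h1 := aux_mono γ hγ hs0 hst
            have h2 : (1 + s) * g₂ (1 + s) ≤ (1 + t) * g₂ (1 + t) :=
              hmono (by simp only [Set.mem_Ici]; linarith)
                (by simp only [Set.mem_Ici]; linarith) (by linarith)
            have hg2s : 0 ≤ (1 + s) * g₂ (1 + s) := by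
              have := (hg₂pos (1 + s) (by linarith)).le
              positivity
            have hA : (0:ℝ) ≤ (1 + t) ^ (γ - 2) * t ^ 2 := by positivity
            exact mul_le_mul h1 h2 hg2s hA
        _ = Φt := by rw [hΦt]; ring
    have h1 : Real.sqrt ((1 + s) ^ (γ - 2) * s ^ 2 * g₁ (1 + s))
        ≤ Real.sqrt (Φt / (1 + s)) := Real.sqrt_le_sqrt key
    refine h1.trans_eq ?_
    rw [show -(2:ℝ)⁻¹ = -(1/2) by norm_num, Real.rpow_neg h1s.le,
      ← Real.sqrt_eq_rpow, Real.sqrt_div hΦtnn, div_eq_mul_inv]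
  -- continuity / integrability of LHS integrand
  have hadd : Continuous (fun s : ℝ => 1 + s) := continuous_const.add continuous_id
  have hcont : ContinuousOn
      (fun s : ℝ => Real.sqrt ((1 + s) ^ (γ - 2) * s ^ 2 * g₁ (1 + s)))
      (Set.Icc 0 t) := by
    apply Real.continuous_sqrt.comp_continuousOn
    apply ContinuousOn.mul
    · apply ContinuousOn.mul
      · exact hadd.continuousOn.rpow_const (fun s hs => Or.inl (by
          have : (0:ℝ) ≤ s := hs.1
          positivity))
      · exact (continuous_pow 2).continuousOn
    · exact hg₁c.comp hadd.continuousOn (fun s hs => by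
        simp only [Set.mem_Ici]
        linarith [hs.1])
  have hcont2 : ContinuousOn
      (fun s : ℝ => Real.sqrt Φt * (1 + s) ^ (-(2:ℝ)⁻¹)) (Set.Icc 0 t) := by
    apply ContinuousOn.mul continuousOn_const
    exact hadd.continuousOn.rpow_const (fun s hs => Or.inl (by
      have : (0:ℝ) ≤ s := hs.1
      positivity))
  have huIcc : Set.uIcc (0:ℝ) t = Set.Icc 0 t := Set.uIcc_of_le ht
  have hint1 : IntervalIntegrable
      (fun s : ℝ => Real.sqrt ((1 + s) ^ (γ - 2) * s ^ 2 * g₁ (1 + s)))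
      MeasureTheory.volume 0 t := (huIcc ▸ hcont).intervalIntegrable
  have hint2 : IntervalIntegrable
      (fun s : ℝ => Real.sqrt Φt * (1 + s) ^ (-(2:ℝ)⁻¹))
      MeasureTheory.volume 0 t := (huIcc ▸ hcont2).intervalIntegrable
  -- compute the right integral
  have hI : (∫ s in (0:ℝ)..t, (1 + s) ^ (-(2:ℝ)⁻¹))
      = 2 * Real.sqrt (1 + t) - 2 := by
    have hc : (∫ s in (0:ℝ)..t, (fun u : ℝ => u ^ (-(2:ℝ)⁻¹)) (1 + s))
        = ∫ u in (1:ℝ)..(1 + t), u ^ (-(2:ℝ)⁻¹) := by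
      simpa using intervalIntegral.integral_comp_add_left
        (a := 0) (b := t) (fun u : ℝ => u ^ (-(2:ℝ)⁻¹)) 1
    rw [show (fun s : ℝ => (1 + s) ^ (-(2:ℝ)⁻¹))
        = (fun s : ℝ => (fun u : ℝ => u ^ (-(2:ℝ)⁻¹)) (1 + s)) from rfl, hc]
    rw [integral_rpow (Or.inr ⟨by norm_num, by
      intro h
      rcases Set.mem_uIcc.mp h with ⟨h1, _⟩ | ⟨_, h2⟩ <;> linarith⟩)]
    rw [show -(2:ℝ)⁻¹ + 1 = 1/2 by norm_num, Real.one_rpow, ← Real.sqrt_eq_rpow]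
    ring
  -- bound the integral
  have hIle : (∫ s in (0:ℝ)..t, Real.sqrt ((1 + s) ^ (γ - 2) * s ^ 2 * g₁ (1 + s)))
      ≤ 2 * Real.sqrt Φt * Real.sqrt (1 + t) := by
    calc (∫ s in (0:ℝ)..t, Real.sqrt ((1 + s) ^ (γ - 2) * s ^ 2 * g₁ (1 + s)))
        ≤ ∫ s in (0:ℝ)..t, Real.sqrt Φt * (1 + s) ^ (-(2:ℝ)⁻¹) :=
          intervalIntegral.integral_mono_on ht hint1 hint2 hpt
      _ = Real.sqrt Φt * (2 * Real.sqrt (1 + t) - 2) := by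
          rw [intervalIntegral.integral_const_mul, hI]
      _ ≤ 2 * Real.sqrt Φt * Real.sqrt (1 + t) := by
          have h := Real.sqrt_nonneg Φt
          nlinarith
  have hInn : 0 ≤ ∫ s in (0:ℝ)..t, Real.sqrt ((1 + s) ^ (γ - 2) * s ^ 2 * g₁ (1 + s)) :=
    intervalIntegral.integral_nonneg ht (fun s _ => Real.sqrt_nonneg _)
  constructor
  · linarith
  · have hB : (2 * Real.sqrt Φt * Real.sqrt (1 + t)) ^ 2 = 4 * (Φt * (1 + t)) := by
      rw [mul_pow, mul_pow, Real.sq_sqrt hΦtnn, Real.sq_sqrt h1t.le]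
      ring
    have hPhi : Φt * (1 + t) = (1 + t) ^ (γ - 2) * t ^ 2 * (1 + t) ^ 2 * g₂ (1 + t) := by
      rw [hΦt]; ring
    have hA : (1 + ∫ s in (0:ℝ)..t, Real.sqrt ((1 + s) ^ (γ - 2) * s ^ 2 * g₁ (1 + s)))
        ≤ 1 + 2 * Real.sqrt Φt * Real.sqrt (1 + t) := by linarith
    have hBnn : 0 ≤ 2 * Real.sqrt Φt * Real.sqrt (1 + t) := by positivity
    nlinarith [sq_nonneg (1 - 2 * Real.sqrt Φt * Real.sqrt (1 + t)),
      sq_nonneg (1 + ∫ s in (0:ℝ)..t, Real.sqrt ((1 + s) ^ (γ - 2) * s ^ 2 * g₁ (1 + s)))]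
end
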